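/- arXiv:2203.12464 — 4 statements merged into one kernel-verified Lean document; each statement's English description precedes it below -/
import Mathlib

section
/- Let θ > 0, let F₀ be a continuous distribution function on [0,∞), and set F = F₀^θ. Let X₁, X₂, Y₁, Y₂ be independent random variables with X₁, X₂ distributed according to F₀ and Y₁, Y₂ distributed according to F. Then P(X₁ < Y₁, Y₂ < X₂ < Y₁) = P(Y₁ < X₁, X₂ < Y₂ < X₁); that is, the measure of departure Δ(F,F₀) = P(X₁ < Y₁, Y₂ < X₂ < Y₁) − P(Y₁ < X₁, X₂ < Y₂ < X₁) vanishes under the proportional reversed hazard rate null hypothesis. -/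
open MeasureTheory ProbabilityTheory
open MeasureTheory Set Filter Topology
open scoped ENNReal

section Cdf
variable (ν : Measure ℝ) [IsProbabilityMeasure ν] (G : ℝ → ℝ)
  (h : ∀ x, (ν (Iic x)).toReal = G x) (hGc : Continuous G)
include h

lemma cdf_Iic (x : ℝ) : ν (Iic x) = ENNReal.ofReal (G x) := by
  rw [← h x, ENNReal.ofReal_toReal (measure_ne_top ν _)]

lemma cdf_nonneg (x : ℝ) : 0 ≤ G x := by rw [← h x]; exact ENNReal.toReal_nonneg

lemma cdf_mono : Monotone G := by
  intro x y hxy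
  rw [← h x, ← h y]
  exact ENNReal.toReal_mono (measure_ne_top ν _) (measure_mono (Iic_subset_Iic.2 hxy))

lemma cdf_le_one (x : ℝ) : G x ≤ 1 := by
  rw [← h x]
  exact ENNReal.toReal_le_of_le_ofReal one_pos.le (by simpa using prob_le_one)

include hGc in
lemma cdf_map_eq : ν.map G = volume.restrict (Ioc 0 1) := by
  have hGm : Measurable G := hGc.measurable
  have : IsProbabilityMeasure (ν.map G) := Measure.isProbabilityMeasure_map hGm.aemeasurable
  refine Measure.ext_of_Iic _ _ (fun t => ?_)
  rw [Measure.map_apply hGm measurableSet_Iic, Measure.restrict_apply measurableSet_Iic]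
  rcases lt_or_ge t 0 with ht | ht
  · have h1 : G ⁻¹' Iic t = ∅ := by
      ext x; simp only [mem_preimage, mem_Iic, mem_empty_iff_false, iff_false, not_le]
      exact lt_of_lt_of_le ht (cdf_nonneg ν G h x)
    have h2 : Iic t ∩ Ioc 0 1 = ∅ := by
      ext x; simp only [mem_inter_iff, mem_Iic, mem_Ioc, mem_empty_iff_false, iff_false]
      rintro ⟨h1', h2', _⟩; linarith
    simp [h1, h2]
  rcases le_or_gt 1 t with ht1 | ht1
  · have h1 : G ⁻¹' Iic t = univ := by
      ext x; simp only [mem_preimage, mem_Iic, mem_univ, iff_true]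
      exact le_trans (cdf_le_one ν G h x) ht1
    have h2 : Iic t ∩ Ioc 0 1 = Ioc 0 1 := by
      ext x; simp only [mem_inter_iff, mem_Iic, mem_Ioc, and_iff_right_iff_imp]
      rintro ⟨_, h2'⟩; linarith
    simp [h1, h2]
  · -- 0 ≤ t < 1
    have h2 : Iic t ∩ Ioc 0 1 = Ioc 0 t := by
      ext x; simp only [mem_inter_iff, mem_Iic, mem_Ioc]
      constructor
      · rintro ⟨h1', h2', _⟩; exact ⟨h2', h1'⟩
      · rintro ⟨h1', h2'⟩; exact ⟨h2', h1', by linarith⟩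
    rw [h2, Real.volume_Ioc, sub_zero]
    -- compute ν {x | G x ≤ t}
    set s : Set ℝ := G ⁻¹' Iic t with hs
    rcases eq_empty_or_nonempty s with hse | hsne
    · -- s empty: show t = 0
      have ht0 : t ≤ 0 := by
        by_contra ht0
        push_neg at ht0
        have hge : ∀ x : ℝ, ENNReal.ofReal t ≤ ν (Iic x) := by
          intro x
          rw [cdf_Iic ν G h x]
          have : t < G x := by
            by_contra hc; push_neg at hc
            exact (eq_empty_iff_forall_notMem.1 hse x) hc
          exact ENNReal.ofReal_le_ofReal this.le
        have hiI : (⋂ n : ℕ, Iic (-(n : ℝ))) = ∅ := by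
          ext x
          simp only [mem_iInter, mem_Iic, mem_empty_iff_false, iff_false, not_forall, not_le]
          obtain ⟨n, hn⟩ := exists_nat_gt (-x)
          exact ⟨n, by linarith⟩
        have htend : Tendsto (fun n : ℕ => ν (Iic (-(n : ℝ)))) atTop (𝓝 0) := by
          have := tendsto_measure_iInter_atTop (μ := ν) (s := fun n : ℕ => Iic (-(n : ℝ)))
            (fun n => measurableSet_Iic.nullMeasurableSet)
            (fun m n hmn => Iic_subset_Iic.2 (by simp; exact_mod_cast hmn))
            ⟨0, measure_ne_top ν _⟩
          rwa [hiI, measure_empty] at this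
        have : ENNReal.ofReal t ≤ 0 := ge_of_tendsto' htend (fun n => hge _)
        simp only [nonpos_iff_eq_zero, ENNReal.ofReal_eq_zero] at this
        linarith
      have ht0' : t = 0 := le_antisymm ht0 ht
      rw [hse, measure_empty, ht0']
      simp
    · have hbdd : BddAbove s := by
        by_contra hub
        have hsuniv : s = univ := by
          ext y
          simp only [mem_univ, iff_true]
          rw [not_bddAbove_iff] at hub
          obtain ⟨x, hx, hyx⟩ := hub y
          exact le_trans (cdf_mono ν G h hyx.le) hx
        have hle : ∀ x : ℝ, ν (Iic x) ≤ ENNReal.ofReal t := by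
          intro x
          rw [cdf_Iic ν G h x]
          exact ENNReal.ofReal_le_ofReal (by have := hsuniv ▸ (mem_univ x); exact this)
        have h1 : (1 : ℝ≥0∞) ≤ ENNReal.ofReal t :=
          le_of_tendsto' (by simpa using tendsto_measure_Iic_atTop ν) hle
        have : ENNReal.ofReal t < 1 := ENNReal.ofReal_lt_one.2 ht1
        exact absurd h1 this.not_ge
      have hclosed : IsClosed s := IsClosed.preimage hGc isClosed_Iic
      set c := sSup s with hc
      have hcs : c ∈ s := hclosed.csSup_mem hsne hbdd
      have hseq : s = Iic c := by
        ext x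
        constructor
        · intro hx; exact le_csSup hbdd hx
        · intro hx
          exact le_trans (cdf_mono ν G h hx) hcs
      have hGct : G c = t := by
        refine le_antisymm hcs ?_
        have hlim : Tendsto (fun n : ℕ => G (c + 1 / (n + 1))) atTop (𝓝 (G c)) := by
          have h1 : Tendsto (fun n : ℕ => c + 1 / ((n : ℝ) + 1)) atTop (𝓝 c) := by
            simpa using (tendsto_const_nhds : Tendsto (fun _ : ℕ => c) atTop (𝓝 c)).add tendsto_one_div_add_atTop_nhds_zero_nat
          exact (hGc.tendsto c).comp h1
        refine ge_of_tendsto' hlim (fun n => ?_)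
        have hnotmem : c + 1 / ((n : ℝ) + 1) ∉ s := by
          intro hmem
          have := le_csSup hbdd hmem
          have hpos : (0 : ℝ) < 1 / ((n : ℝ) + 1) := by positivity
          linarith
        simp only [hs, mem_preimage, mem_Iic, not_le] at hnotmem
        exact hnotmem.le
      rw [hseq, cdf_Iic ν G h c, hGct]

include hGc in
lemma cdf_preimage_singleton (u : ℝ) : ν (G ⁻¹' {u}) = 0 := by
  have hGm : Measurable G := hGc.measurable
  have := Measure.map_apply hGm (measurableSet_singleton u) (μ := ν)
  rw [cdf_map_eq ν G h hGc] at this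
  rw [← this, Measure.restrict_apply (measurableSet_singleton u)]
  exact le_antisymm (le_trans (measure_mono inter_subset_left) (by simp)) bot_le

include hGc in
lemma cdf_Iio (x : ℝ) : ν (Iio x) = ENNReal.ofReal (G x) := by
  have hx : ν {x} = 0 :=
    le_antisymm (le_trans (measure_mono (fun y hy => by
      simp only [mem_singleton_iff] at hy
      simp [hy])) (le_of_eq (cdf_preimage_singleton ν G h hGc (G x)))) bot_le
  rw [← cdf_Iic ν G h x, ← measure_congr (Iio_ae_eq_Iic' hx)]

end Cdf

section Key
variable (ν : Measure ℝ) [IsProbabilityMeasure ν] (G : ℝ → ℝ)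
  (h : ∀ x, (ν (Iic x)).toReal = G x) (hGc : Continuous G)

/-- `∫ t in Ioc 0 U, t^q dt = U^(q+1)/(q+1)` in `ℝ≥0∞` form. -/
lemma lint_rpow (q : ℝ) (hq : 0 < q) (U : ℝ) (hU : 0 ≤ U) :
    ∫⁻ t in Ioc 0 U, ENNReal.ofReal (t ^ q) = ENNReal.ofReal (U ^ (q + 1) / (q + 1)) := by
  have hint : IntervalIntegrable (fun t : ℝ => t ^ q) volume 0 U :=
    intervalIntegral.intervalIntegrable_rpow (Or.inl hq.le)
  have hIntOn : IntegrableOn (fun t : ℝ => t ^ q) (Ioc 0 U) volume := hint.1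
  have hnn : 0 ≤ᵐ[volume.restrict (Ioc 0 U)] fun t : ℝ => t ^ q :=
    (ae_restrict_iff' measurableSet_Ioc).2 (ae_of_all _ fun t ht => Real.rpow_nonneg ht.1.le q)
  rw [← ofReal_integral_eq_lintegral_ofReal hIntOn hnn]
  congr 1
  rw [← intervalIntegral.integral_of_le hU]
  rw [integral_rpow (Or.inl (by linarith))]
  rw [Real.zero_rpow (by positivity), sub_zero]

include h hGc in
lemma key (q : ℝ) (hq : 0 < q) (y : ℝ) :
    ∫⁻ x in Iio y, ENNReal.ofReal (G x ^ q) ∂ν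
      = ENNReal.ofReal (G y ^ (q + 1) / (q + 1)) := by
  have hGm : Measurable G := hGc.measurable
  have hae : Iio y =ᵐ[ν] (G ⁻¹' Iic (G y)) := by
    rw [MeasureTheory.ae_eq_set]
    constructor
    · refine measure_mono_null (fun x hx => ?_) (measure_empty (μ := ν))
      rcases hx with ⟨hx1, hx2⟩
      exact hx2 (cdf_mono ν G h (le_of_lt hx1))
    · refine measure_mono_null (fun x hx => ?_) (cdf_preimage_singleton ν G h hGc (G y))
      rcases hx with ⟨hx1, hx2⟩
      simp only [mem_preimage, mem_Iic] at hx1 ⊢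
      simp only [mem_Iio, not_lt] at hx2
      exact le_antisymm hx1 (cdf_mono ν G h hx2)
  rw [Measure.restrict_congr_set hae]
  have hφm : Measurable fun t : ℝ => ENNReal.ofReal (t ^ q) :=
    ENNReal.measurable_ofReal.comp (Real.continuous_rpow_const hq.le).measurable
  rw [← lintegral_indicator (hGm measurableSet_Iic)]
  have hind : (G ⁻¹' Iic (G y)).indicator (fun x => ENNReal.ofReal (G x ^ q))
      = fun x => (Iic (G y)).indicator (fun t => ENNReal.ofReal (t ^ q)) (G x) := by
    funext x
    by_cases hx : G x ∈ Iic (G y)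
    · rw [indicator_of_mem hx, indicator_of_mem (by exact hx)]
    · rw [indicator_of_notMem hx, indicator_of_notMem (by exact hx)]
  rw [hind, ← lintegral_map (hφm.indicator measurableSet_Iic) hGm,
    cdf_map_eq ν G h hGc, lintegral_indicator measurableSet_Iic,
    Measure.restrict_restrict measurableSet_Iic]
  have hset : Iic (G y) ∩ Ioc 0 1 = Ioc 0 (G y) := by
    ext t
    simp only [mem_inter_iff, mem_Iic, mem_Ioc]
    constructor
    · rintro ⟨h1, h2, _⟩; exact ⟨h2, h1⟩
    · rintro ⟨h1, h2⟩; exact ⟨h2, h1, le_trans h2 (cdf_le_one ν G h y)⟩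
  rw [hset, lint_rpow q hq (G y) (cdf_nonneg ν G h y)]

include h hGc in
lemma key_univ (q : ℝ) (hq : 0 < q) :
    ∫⁻ x, ENNReal.ofReal (G x ^ q) ∂ν = ENNReal.ofReal (1 / (q + 1)) := by
  have hGm : Measurable G := hGc.measurable
  have hφm : Measurable fun t : ℝ => ENNReal.ofReal (t ^ q) :=
    ENNReal.measurable_ofReal.comp (Real.continuous_rpow_const hq.le).measurable
  rw [← lintegral_map hφm hGm, cdf_map_eq ν G h hGc,
    lint_rpow q hq 1 zero_le_one, Real.one_rpow]

end Key

lemma master (F₀ : ℝ → ℝ) (hF₀c : Continuous F₀) (hF₀nn : ∀ x, 0 ≤ F₀ x)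
    (a b : ℝ) (ha : 0 < a) (hb : 0 < b)
    (ν1 μ1 μ2 ν2 : Measure ℝ) [IsProbabilityMeasure ν1] [IsProbabilityMeasure μ1]
    [IsProbabilityMeasure μ2] [IsProbabilityMeasure ν2]
    (hν1 : ∀ x, (ν1 (Iic x)).toReal = F₀ x ^ a)
    (hμ1 : ∀ x, (μ1 (Iic x)).toReal = F₀ x ^ b)
    (hμ2 : ∀ x, (μ2 (Iic x)).toReal = F₀ x ^ b)
    (hν2 : ∀ x, (ν2 (Iic x)).toReal = F₀ x ^ a) :
    (ν1.prod (μ1.prod (μ2.prod ν2)))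
        {p : ℝ × ℝ × ℝ × ℝ | p.2.1 < p.1 ∧ p.2.2.2 < p.2.2.1 ∧ p.2.2.1 < p.1}
      = ENNReal.ofReal (a * b / (2 * (a + b) ^ 2)) := by
  set G : ℝ → ℝ := fun x => F₀ x ^ a with hG
  set H : ℝ → ℝ := fun x => F₀ x ^ b with hH
  have hGc : Continuous G := hF₀c.rpow_const (fun x => Or.inr ha.le)
  have hHc : Continuous H := hF₀c.rpow_const (fun x => Or.inr hb.le)
  have hab : 0 < a + b := by linarith
  have m1 : Measurable fun p : ℝ × ℝ × ℝ × ℝ => p.1 := measurable_fst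
  have m2 : Measurable fun p : ℝ × ℝ × ℝ × ℝ => p.2.1 := measurable_fst.comp measurable_snd
  have m3 : Measurable fun p : ℝ × ℝ × ℝ × ℝ => p.2.2.1 :=
    (measurable_fst.comp measurable_snd).comp measurable_snd
  have m4 : Measurable fun p : ℝ × ℝ × ℝ × ℝ => p.2.2.2 :=
    (measurable_snd.comp measurable_snd).comp measurable_snd
  have hS : MeasurableSet {p : ℝ × ℝ × ℝ × ℝ | p.2.1 < p.1 ∧ p.2.2.2 < p.2.2.1 ∧ p.2.2.1 < p.1} :=
    ((measurableSet_lt m2 m1).inter ((measurableSet_lt m4 m3).inter (measurableSet_lt m3 m1)))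
  have hT : ∀ y : ℝ, MeasurableSet {w : ℝ × ℝ | w.2 < w.1 ∧ w.1 < y} := fun y =>
    (measurableSet_lt measurable_snd measurable_fst).inter
      (measurableSet_lt measurable_fst measurable_const)
  rw [Measure.prod_apply hS]
  have hinner : ∀ y : ℝ,
      (μ1.prod (μ2.prod ν2)) (Prod.mk y ⁻¹'
          {p : ℝ × ℝ × ℝ × ℝ | p.2.1 < p.1 ∧ p.2.2.2 < p.2.2.1 ∧ p.2.2.1 < p.1})
        = ENNReal.ofReal (b / (a + b)) * ENNReal.ofReal (G y ^ ((a + 2 * b) / a)) := by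
    intro y
    have hpre : Prod.mk y ⁻¹'
        {p : ℝ × ℝ × ℝ × ℝ | p.2.1 < p.1 ∧ p.2.2.2 < p.2.2.1 ∧ p.2.2.1 < p.1}
        = Iio y ×ˢ {w : ℝ × ℝ | w.2 < w.1 ∧ w.1 < y} := by
      ext p
      simp only [mem_preimage, mem_setOf_eq, mem_prod, mem_Iio]
    rw [hpre, Measure.prod_prod]
    have hT2 : (μ2.prod ν2) {w : ℝ × ℝ | w.2 < w.1 ∧ w.1 < y}
        = ENNReal.ofReal (H y ^ (a / b + 1) / (a / b + 1)) := by
      rw [Measure.prod_apply (hT y)]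
      have hsec : ∀ x : ℝ, ν2 (Prod.mk x ⁻¹' {w : ℝ × ℝ | w.2 < w.1 ∧ w.1 < y})
          = (Iio y).indicator (fun x => ENNReal.ofReal (H x ^ (a / b))) x := by
        intro x
        have hpre2 : Prod.mk x ⁻¹' {w : ℝ × ℝ | w.2 < w.1 ∧ w.1 < y}
            = if x < y then Iio x else ∅ := by
          ext v
          by_cases hxy : x < y <;> simp [hxy]
        rw [hpre2]
        by_cases hxy : x < y
        · rw [if_pos hxy, indicator_of_mem (show x ∈ Iio y from hxy), cdf_Iio ν2 G hν2 hGc x]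
          congr 1
          show F₀ x ^ a = (F₀ x ^ b) ^ (a / b)
          rw [← Real.rpow_mul (hF₀nn x), show b * (a / b) = a by field_simp]
        · rw [if_neg hxy, indicator_of_notMem (show x ∉ Iio y by simpa using hxy), measure_empty]
      rw [lintegral_congr hsec, lintegral_indicator measurableSet_Iio,
        key μ2 H hμ2 hHc (a / b) (div_pos ha hb) y]
    rw [hT2, cdf_Iio μ1 H hμ1 hHc y]
    have h1 : H y ^ (a / b + 1) / (a / b + 1) = H y ^ (a / b + 1) * (b / (a + b)) := by
      rw [div_eq_mul_inv]
      congr 1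
      field_simp
    rw [h1]
    have h2 : H y * (H y ^ (a / b + 1) * (b / (a + b)))
        = b / (a + b) * G y ^ ((a + 2 * b) / a) := by
      have eb : b * (a / b + 1) = a + b := by field_simp <;> ring
      have ea : a * ((a + 2 * b) / a) = a + 2 * b := by field_simp <;> ring
      show F₀ y ^ b * ((F₀ y ^ b) ^ (a / b + 1) * (b / (a + b)))
          = b / (a + b) * (F₀ y ^ a) ^ ((a + 2 * b) / a)
      rw [← Real.rpow_mul (hF₀nn y), ← Real.rpow_mul (hF₀nn y), eb, ea, ← mul_assoc,
        ← Real.rpow_add' (hF₀nn y) (show b + (a + b) ≠ 0 by intro hc; linarith),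
        show b + (a + b) = a + 2 * b by ring]
      exact mul_comm _ _
    rw [← ENNReal.ofReal_mul (cdf_nonneg μ1 H hμ1 y), h2,
      ENNReal.ofReal_mul (by positivity)]
  rw [lintegral_congr hinner, lintegral_const_mul' _ _ ENNReal.ofReal_ne_top,
    key_univ ν1 G hν1 hGc ((a + 2 * b) / a) (by positivity),
    ← ENNReal.ofReal_mul (by positivity)]
  congr 1
  rw [show (a + 2 * b) / a + 1 = (2 * (a + b)) / a by field_simp <;> ring, one_div_div]
  rw [div_mul_div_comm]
  congr 1
  · ring
  · ring


/-- Under the proportional reversed hazard rate null hypothesis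
`F = F₀ ^ θ` (with `F₀` a continuous distribution function on `[0,∞)`), for independent
`X₁, X₂ ~ F₀` and `Y₁, Y₂ ~ F` we have
`P(X₁ < Y₁, Y₂ < X₂ < Y₁) = P(Y₁ < X₁, X₂ < Y₂ < X₁)`, i.e. the measure of
departure `Δ(F,F₀)` vanishes. -/
theorem departure_vanishes_under_null
    {Ω : Type*} [MeasureSpace Ω] [IsProbabilityMeasure (ℙ : Measure Ω)]
    (θ : ℝ) (hθ : 0 < θ)
    (X₁ X₂ Y₁ Y₂ : Ω → ℝ) (F₀ : ℝ → ℝ)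
    (hX₁m : Measurable X₁) (hX₂m : Measurable X₂)
    (hY₁m : Measurable Y₁) (hY₂m : Measurable Y₂)
    (hF₀cont : Continuous F₀)
    (hX₁nn : ∀ ω, 0 ≤ X₁ ω) (hX₂nn : ∀ ω, 0 ≤ X₂ ω)
    (hY₁nn : ∀ ω, 0 ≤ Y₁ ω) (hY₂nn : ∀ ω, 0 ≤ Y₂ ω)
    (hindep : iIndepFun ![X₁, X₂, Y₁, Y₂] ℙ)
    (hX₁cdf : ∀ x, (ℙ {ω | X₁ ω ≤ x}).toReal = F₀ x)
    (hX₂cdf : ∀ x, (ℙ {ω | X₂ ω ≤ x}).toReal = F₀ x)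
    (hY₁cdf : ∀ x, (ℙ {ω | Y₁ ω ≤ x}).toReal = F₀ x ^ θ)
    (hY₂cdf : ∀ x, (ℙ {ω | Y₂ ω ≤ x}).toReal = F₀ x ^ θ) :
    ℙ {ω | X₁ ω < Y₁ ω ∧ Y₂ ω < X₂ ω ∧ X₂ ω < Y₁ ω} =
      ℙ {ω | Y₁ ω < X₁ ω ∧ X₂ ω < Y₂ ω ∧ Y₂ ω < X₁ ω} := by
  have hF₀nn : ∀ x, 0 ≤ F₀ x := fun x => (hX₁cdf x) ▸ ENNReal.toReal_nonneg
  have hf : ∀ i, Measurable (![X₁, X₂, Y₁, Y₂] i) := by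
    intro i; fin_cases i <;> simpa
  -- measures
  haveI iX₁ : IsProbabilityMeasure (Measure.map X₁ ℙ) :=
    Measure.isProbabilityMeasure_map hX₁m.aemeasurable
  haveI iX₂ : IsProbabilityMeasure (Measure.map X₂ ℙ) :=
    Measure.isProbabilityMeasure_map hX₂m.aemeasurable
  haveI iY₁ : IsProbabilityMeasure (Measure.map Y₁ ℙ) :=
    Measure.isProbabilityMeasure_map hY₁m.aemeasurable
  haveI iY₂ : IsProbabilityMeasure (Measure.map Y₂ ℙ) :=
    Measure.isProbabilityMeasure_map hY₂m.aemeasurable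
  have cX₁ : ∀ x, ((Measure.map X₁ ℙ) (Iic x)).toReal = F₀ x ^ (1 : ℝ) := fun x => by
    rw [Measure.map_apply hX₁m measurableSet_Iic, Real.rpow_one]; exact hX₁cdf x
  have cX₂ : ∀ x, ((Measure.map X₂ ℙ) (Iic x)).toReal = F₀ x ^ (1 : ℝ) := fun x => by
    rw [Measure.map_apply hX₂m measurableSet_Iic, Real.rpow_one]; exact hX₂cdf x
  have cY₁ : ∀ x, ((Measure.map Y₁ ℙ) (Iic x)).toReal = F₀ x ^ θ := fun x => by
    rw [Measure.map_apply hY₁m measurableSet_Iic]; exact hY₁cdf x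
  have cY₂ : ∀ x, ((Measure.map Y₂ ℙ) (Iic x)).toReal = F₀ x ^ θ := fun x => by
    rw [Measure.map_apply hY₂m measurableSet_Iic]; exact hY₂cdf x
  -- the common event shape
  set S : Set (ℝ × ℝ × ℝ × ℝ) :=
    {p : ℝ × ℝ × ℝ × ℝ | p.2.1 < p.1 ∧ p.2.2.2 < p.2.2.1 ∧ p.2.2.1 < p.1} with hSdef
  have hS : MeasurableSet S := by
    have m1 : Measurable fun p : ℝ × ℝ × ℝ × ℝ => p.1 := measurable_fst
    have m2 : Measurable fun p : ℝ × ℝ × ℝ × ℝ => p.2.1 := measurable_fst.comp measurable_snd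
    have m3 : Measurable fun p : ℝ × ℝ × ℝ × ℝ => p.2.2.1 :=
      (measurable_fst.comp measurable_snd).comp measurable_snd
    have m4 : Measurable fun p : ℝ × ℝ × ℝ × ℝ => p.2.2.2 :=
      (measurable_snd.comp measurable_snd).comp measurable_snd
    exact (measurableSet_lt m2 m1).inter ((measurableSet_lt m4 m3).inter (measurableSet_lt m3 m1))
  -- Event A
  have hA2 : ProbabilityTheory.IndepFun X₁ (fun ω => (X₂ ω, Y₂ ω)) ℙ :=
    (hindep.indepFun_prodMk hf 1 3 0 (by decide) (by decide)).symm
  have h23 : ProbabilityTheory.IndepFun X₂ Y₂ ℙ :=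
    hindep.indepFun (show (1 : Fin 4) ≠ 3 by decide)
  have hA1 : ProbabilityTheory.IndepFun Y₁ (fun ω => (X₁ ω, (X₂ ω, Y₂ ω))) ℙ := by
    have h := hindep.indepFun_finset {2} ({0, 1, 3} : Finset (Fin 4)) (by decide) hf
    have hφ : Measurable fun v : (({2} : Finset (Fin 4)) → ℝ) => v ⟨2, by decide⟩ :=
      measurable_pi_apply _
    have hψ : Measurable fun v : (({0, 1, 3} : Finset (Fin 4)) → ℝ) =>
        ((v ⟨0, by decide⟩, (v ⟨1, by decide⟩, v ⟨3, by decide⟩)) : ℝ × ℝ × ℝ) :=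
      (measurable_pi_apply _).prodMk ((measurable_pi_apply _).prodMk (measurable_pi_apply _))
    exact h.comp hφ hψ
  have c23 : Measure.map (fun ω => (X₂ ω, Y₂ ω)) ℙ
      = (Measure.map X₂ ℙ).prod (Measure.map Y₂ ℙ) :=
    (ProbabilityTheory.indepFun_iff_map_prod_eq_prod_map_map hX₂m.aemeasurable
      hY₂m.aemeasurable).1 h23
  have c123 : Measure.map (fun ω => (X₁ ω, (X₂ ω, Y₂ ω))) ℙ
      = (Measure.map X₁ ℙ).prod ((Measure.map X₂ ℙ).prod (Measure.map Y₂ ℙ)) := by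
    rw [(ProbabilityTheory.indepFun_iff_map_prod_eq_prod_map_map hX₁m.aemeasurable
      (hX₂m.prodMk hY₂m).aemeasurable).1 hA2, c23]
  have cA : Measure.map (fun ω => (Y₁ ω, (X₁ ω, (X₂ ω, Y₂ ω)))) ℙ
      = (Measure.map Y₁ ℙ).prod
          ((Measure.map X₁ ℙ).prod ((Measure.map X₂ ℙ).prod (Measure.map Y₂ ℙ))) := by
    rw [(ProbabilityTheory.indepFun_iff_map_prod_eq_prod_map_map hY₁m.aemeasurable
      (hX₁m.prodMk (hX₂m.prodMk hY₂m)).aemeasurable).1 hA1, c123]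
  have hJAm : Measurable fun ω => (Y₁ ω, (X₁ ω, (X₂ ω, Y₂ ω))) :=
    hY₁m.prodMk (hX₁m.prodMk (hX₂m.prodMk hY₂m))
  have eA : ℙ {ω | X₁ ω < Y₁ ω ∧ Y₂ ω < X₂ ω ∧ X₂ ω < Y₁ ω}
      = ((Measure.map Y₁ ℙ).prod
          ((Measure.map X₁ ℙ).prod ((Measure.map X₂ ℙ).prod (Measure.map Y₂ ℙ)))) S := by
    rw [← cA, Measure.map_apply hJAm hS]
    rfl
  -- Event B
  have hB2 : ProbabilityTheory.IndepFun Y₁ (fun ω => (Y₂ ω, X₂ ω)) ℙ :=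
    (hindep.indepFun_prodMk hf 3 1 2 (by decide) (by decide)).symm
  have hB3 : ProbabilityTheory.IndepFun Y₂ X₂ ℙ :=
    hindep.indepFun (show (3 : Fin 4) ≠ 1 by decide)
  have hB1 : ProbabilityTheory.IndepFun X₁ (fun ω => (Y₁ ω, (Y₂ ω, X₂ ω))) ℙ := by
    have h := hindep.indepFun_finset {0} ({1, 2, 3} : Finset (Fin 4)) (by decide) hf
    have hφ : Measurable fun v : (({0} : Finset (Fin 4)) → ℝ) => v ⟨0, by decide⟩ :=
      measurable_pi_apply _
    have hψ : Measurable fun v : (({1, 2, 3} : Finset (Fin 4)) → ℝ) =>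
        ((v ⟨2, by decide⟩, (v ⟨3, by decide⟩, v ⟨1, by decide⟩)) : ℝ × ℝ × ℝ) :=
      (measurable_pi_apply _).prodMk ((measurable_pi_apply _).prodMk (measurable_pi_apply _))
    exact h.comp hφ hψ
  have d23 : Measure.map (fun ω => (Y₂ ω, X₂ ω)) ℙ
      = (Measure.map Y₂ ℙ).prod (Measure.map X₂ ℙ) :=
    (ProbabilityTheory.indepFun_iff_map_prod_eq_prod_map_map hY₂m.aemeasurable
      hX₂m.aemeasurable).1 hB3
  have d123 : Measure.map (fun ω => (Y₁ ω, (Y₂ ω, X₂ ω))) ℙ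
      = (Measure.map Y₁ ℙ).prod ((Measure.map Y₂ ℙ).prod (Measure.map X₂ ℙ)) := by
    rw [(ProbabilityTheory.indepFun_iff_map_prod_eq_prod_map_map hY₁m.aemeasurable
      (hY₂m.prodMk hX₂m).aemeasurable).1 hB2, d23]
  have dB : Measure.map (fun ω => (X₁ ω, (Y₁ ω, (Y₂ ω, X₂ ω)))) ℙ
      = (Measure.map X₁ ℙ).prod
          ((Measure.map Y₁ ℙ).prod ((Measure.map Y₂ ℙ).prod (Measure.map X₂ ℙ))) := by
    rw [(ProbabilityTheory.indepFun_iff_map_prod_eq_prod_map_map hX₁m.aemeasurable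
      (hY₁m.prodMk (hY₂m.prodMk hX₂m)).aemeasurable).1 hB1, d123]
  have hJBm : Measurable fun ω => (X₁ ω, (Y₁ ω, (Y₂ ω, X₂ ω))) :=
    hX₁m.prodMk (hY₁m.prodMk (hY₂m.prodMk hX₂m))
  have eB : ℙ {ω | Y₁ ω < X₁ ω ∧ X₂ ω < Y₂ ω ∧ Y₂ ω < X₁ ω}
      = ((Measure.map X₁ ℙ).prod
          ((Measure.map Y₁ ℙ).prod ((Measure.map Y₂ ℙ).prod (Measure.map X₂ ℙ)))) S := by
    rw [← dB, Measure.map_apply hJBm hS]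
    rfl
  rw [eA, eB, hSdef]
  rw [master F₀ hF₀cont hF₀nn θ 1 hθ one_pos _ _ _ _ cY₁ cX₁ cX₂ cY₂,
    master F₀ hF₀cont hF₀nn 1 θ one_pos hθ _ _ _ _ cX₁ cY₁ cY₂ cX₂]
  congr 1
  ring
end

section
/- Let F, F₀ be distribution functions on [0,∞) with continuous densities f, f₀ that are positive on (0,∞), and suppose the ratio of reversed hazard rates x ↦ (f(x)F₀(x))/(F(x)f₀(x)) is monotone increasing on (0,∞). Then Δ(F,F₀) = ∬_{0<x₁<x₂} [F(x₁)f(x₂)F₀(x₂)f₀(x₁) − F(x₂)f(x₁)F₀(x₁)f₀(x₂)] dx₁ dx₂ ≥ 0; moreover, if the ratio is strictly increasing on some nonempty open subinterval of (0,∞), then Δ(F,F₀) > 0. -/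
open MeasureTheory ProbabilityTheory

private lemma cdf_facts (f : ℝ → ℝ) (hfc : Continuous f)
    (hfpos : ∀ x > (0 : ℝ), 0 < f x) (hfzero : ∀ x ≤ (0 : ℝ), f x = 0)
    (hfint : ∫ t, f t = 1) :
    (∀ x, 0 ≤ f x) ∧ Integrable f ∧
      (∀ x, 0 ≤ ∫ t in Set.Iic x, f t) ∧ (∀ x, (∫ t in Set.Iic x, f t) ≤ 1) ∧
      (Monotone fun x => ∫ t in Set.Iic x, f t) ∧
      (∀ x > (0:ℝ), 0 < ∫ t in Set.Iic x, f t) := by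
  have hnn : ∀ x, 0 ≤ f x := by
    intro x
    rcases le_or_gt x 0 with h | h
    · simp [hfzero x h]
    · exact (hfpos x h).le
  have hint : Integrable f := by
    by_contra h
    rw [integral_undef h] at hfint
    norm_num at hfint
  have hnn' : 0 ≤ᵐ[(volume : Measure ℝ)] f := Filter.Eventually.of_forall hnn
  refine ⟨hnn, hint, ?_, ?_, ?_, ?_⟩
  · exact fun x => setIntegral_nonneg measurableSet_Iic fun t _ => hnn t
  · intro x
    calc (∫ t in Set.Iic x, f t) ≤ ∫ t, f t := setIntegral_le_integral hint hnn'
      _ = 1 := hfint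
  · intro x y hxy
    exact setIntegral_mono_set hint.integrableOn (ae_restrict_of_ae hnn')
      (HasSubset.Subset.eventuallyLE (Set.Iic_subset_Iic.2 hxy))
  · intro x hx
    have h1 : 0 < ∫ t in Set.Ioo 0 x, f t := by
      rw [setIntegral_pos_iff_support_of_nonneg_ae (ae_restrict_of_ae hnn')
        hint.integrableOn]
      have hsub : Set.Ioo (0:ℝ) x ⊆ Function.support f ∩ Set.Ioo 0 x := by
        intro t ht
        exact ⟨(hfpos t ht.1).ne', ht⟩
      calc (0:ENNReal) < volume (Set.Ioo (0:ℝ) x) := by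
              simp [Real.volume_Ioo, hx]
        _ ≤ _ := measure_mono hsub
    refine lt_of_lt_of_le h1 ?_
    exact setIntegral_mono_set hint.integrableOn (ae_restrict_of_ae hnn')
      (HasSubset.Subset.eventuallyLE (fun t ht => ht.2.le))

/-- Let `F, F₀` be distribution functions on `[0,∞)` with continuous
densities `f, f₀` positive on `(0,∞)`, and suppose the ratio of reversed hazard rates
`x ↦ (f x * F₀ x) / (F x * f₀ x)` is monotone increasing on `(0,∞)`. Then
`Δ(F,F₀) = ∬_{0<x₁<x₂} [F(x₁)f(x₂)F₀(x₂)f₀(x₁) − F(x₂)f(x₁)F₀(x₁)f₀(x₂)] ≥ 0`;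
moreover, if the ratio is strictly increasing on some nonempty open subinterval of
`(0,∞)`, then `Δ(F,F₀) > 0`. -/
theorem departure_nonneg_of_increasing_ratio (F F₀ f f₀ : ℝ → ℝ)
    (hfc : Continuous f) (hf₀c : Continuous f₀)
    (hfpos : ∀ x > (0 : ℝ), 0 < f x) (hf₀pos : ∀ x > (0 : ℝ), 0 < f₀ x)
    (hfzero : ∀ x ≤ (0 : ℝ), f x = 0) (hf₀zero : ∀ x ≤ (0 : ℝ), f₀ x = 0)
    (hfint : ∫ t, f t = 1) (hf₀int : ∫ t, f₀ t = 1)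
    (hF : ∀ x, F x = ∫ t in Set.Iic x, f t)
    (hF₀ : ∀ x, F₀ x = ∫ t in Set.Iic x, f₀ t)
    (hmono : MonotoneOn (fun x => f x * F₀ x / (F x * f₀ x)) (Set.Ioi (0 : ℝ))) :
    0 ≤ ∫ p in {p : ℝ × ℝ | 0 < p.1 ∧ p.1 < p.2},
        (F p.1 * f p.2 * F₀ p.2 * f₀ p.1 - F p.2 * f p.1 * F₀ p.1 * f₀ p.2) ∧
    ((∃ a b : ℝ, 0 ≤ a ∧ a < b ∧
        StrictMonoOn (fun x => f x * F₀ x / (F x * f₀ x)) (Set.Ioo a b)) →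
      0 < ∫ p in {p : ℝ × ℝ | 0 < p.1 ∧ p.1 < p.2},
        (F p.1 * f p.2 * F₀ p.2 * f₀ p.1 - F p.2 * f p.1 * F₀ p.1 * f₀ p.2)) := by
  obtain ⟨hfnn, hfI, hFnn', hFle', hFmono', hFpos'⟩ := cdf_facts f hfc hfpos hfzero hfint
  obtain ⟨hf₀nn, hf₀I, hF₀nn', hF₀le', hF₀mono', hF₀pos'⟩ :=
    cdf_facts f₀ hf₀c hf₀pos hf₀zero hf₀int
  have hFnn : ∀ x, 0 ≤ F x := fun x => (hF x) ▸ hFnn' x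
  have hFle : ∀ x, F x ≤ 1 := fun x => (hF x) ▸ hFle' x
  have hFpos : ∀ x > (0:ℝ), 0 < F x := fun x hx => (hF x) ▸ hFpos' x hx
  have hFmono : Monotone F := by
    intro x y h; rw [hF x, hF y]; exact hFmono' h
  have hF₀nn : ∀ x, 0 ≤ F₀ x := fun x => (hF₀ x) ▸ hF₀nn' x
  have hF₀le : ∀ x, F₀ x ≤ 1 := fun x => (hF₀ x) ▸ hF₀le' x
  have hF₀pos : ∀ x > (0:ℝ), 0 < F₀ x := fun x hx => (hF₀ x) ▸ hF₀pos' x hx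
  have hF₀mono : Monotone F₀ := by
    intro x y h; rw [hF₀ x, hF₀ y]; exact hF₀mono' h
  set r : ℝ → ℝ := fun x => f x * F₀ x / (F x * f₀ x) with hr
  set g : ℝ × ℝ → ℝ := fun p =>
    F p.1 * f p.2 * F₀ p.2 * f₀ p.1 - F p.2 * f p.1 * F₀ p.1 * f₀ p.2 with hg
  set S : Set (ℝ × ℝ) := {p : ℝ × ℝ | 0 < p.1 ∧ p.1 < p.2} with hS
  -- key identity: for positive x, f x * F₀ x = r x * (F x * f₀ x)
  have hkey : ∀ x > (0:ℝ), f x * F₀ x = r x * (F x * f₀ x) := by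
    intro x hx
    have h1 : F x * f₀ x ≠ 0 := (mul_pos (hFpos x hx) (hf₀pos x hx)).ne'
    simp only [hr]; exact (div_mul_cancel₀ _ h1).symm
  -- pointwise nonneg on S
  have hgnn : ∀ p ∈ S, 0 ≤ g p := by
    rintro ⟨x₁, x₂⟩ ⟨h1, h12⟩
    have h2 : (0:ℝ) < x₂ := h1.trans h12
    have hc₁ : 0 < F x₁ * f₀ x₁ := mul_pos (hFpos _ h1) (hf₀pos _ h1)
    have hc₂ : 0 < F x₂ * f₀ x₂ := mul_pos (hFpos _ h2) (hf₀pos _ h2)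
    have hrle : r x₁ ≤ r x₂ := hmono h1 h2 h12.le
    have : g (x₁, x₂) = (F x₁ * f₀ x₁) * (F x₂ * f₀ x₂) * (r x₂ - r x₁) := by
      have e1 := hkey x₁ h1
      have e2 := hkey x₂ h2
      simp only [hg]
      calc F x₁ * f x₂ * F₀ x₂ * f₀ x₁ - F x₂ * f x₁ * F₀ x₁ * f₀ x₂
          = F x₁ * f₀ x₁ * (f x₂ * F₀ x₂) - F x₂ * f₀ x₂ * (f x₁ * F₀ x₁) := by ring
        _ = F x₁ * f₀ x₁ * (r x₂ * (F x₂ * f₀ x₂))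
              - F x₂ * f₀ x₂ * (r x₁ * (F x₁ * f₀ x₁)) := by rw [e1, e2]
        _ = F x₁ * f₀ x₁ * (F x₂ * f₀ x₂) * (r x₂ - r x₁) := by ring
    rw [this]
    exact mul_nonneg (mul_nonneg hc₁.le hc₂.le) (sub_nonneg.2 hrle)
  have hSmeas : MeasurableSet S := by
    have : IsOpen S := by
      have : S = {p : ℝ × ℝ | 0 < p.1} ∩ {p : ℝ × ℝ | p.1 < p.2} := rfl
      rw [this]
      exact (isOpen_lt continuous_const continuous_fst).inter
        (isOpen_lt continuous_fst continuous_snd)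
    exact this.measurableSet
  -- measurability of g
  have hgmeas : Measurable g := by
    have hFm : Measurable F := hFmono.measurable
    have hF₀m : Measurable F₀ := hF₀mono.measurable
    exact (((((hFm.comp measurable_fst).mul
      (hfc.measurable.comp measurable_snd)).mul
      (hF₀m.comp measurable_snd)).mul
      (hf₀c.measurable.comp measurable_fst))).sub
      ((((hFm.comp measurable_snd).mul
      (hfc.measurable.comp measurable_fst)).mul
      (hF₀m.comp measurable_fst)).mul
      (hf₀c.measurable.comp measurable_snd))
  -- integrability of g on ℝ²
  have hbound : Integrable (fun p : ℝ × ℝ => f₀ p.1 * f p.2 + f p.1 * f₀ p.2) := by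
    have h1 : Integrable (fun p : ℝ × ℝ => f₀ p.1 * f p.2) := by
      rw [Measure.volume_eq_prod]; exact hf₀I.mul_prod hfI
    have h2 : Integrable (fun p : ℝ × ℝ => f p.1 * f₀ p.2) := by
      rw [Measure.volume_eq_prod]; exact hfI.mul_prod hf₀I
    exact h1.add h2
  have hgI : Integrable g := by
    refine hbound.mono' hgmeas.aestronglyMeasurable (Filter.Eventually.of_forall ?_)
    rintro ⟨x₁, x₂⟩
    simp only [hg]
    have u1 : 0 ≤ F x₁ * f x₂ * F₀ x₂ * f₀ x₁ :=
      mul_nonneg (mul_nonneg (mul_nonneg (hFnn x₁) (hfnn x₂)) (hF₀nn x₂)) (hf₀nn x₁)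
    have u2 : F x₁ * f x₂ * F₀ x₂ * f₀ x₁ ≤ f₀ x₁ * f x₂ := by
      calc F x₁ * f x₂ * F₀ x₂ * f₀ x₁ = (F x₁ * F₀ x₂) * (f x₂ * f₀ x₁) := by ring
        _ ≤ f x₂ * f₀ x₁ := mul_le_of_le_one_left
              (mul_nonneg (hfnn x₂) (hf₀nn x₁))
              (mul_le_one₀ (hFle x₁) (hF₀nn x₂) (hF₀le x₂))
        _ = f₀ x₁ * f x₂ := by ring
    have u3 : 0 ≤ F x₂ * f x₁ * F₀ x₁ * f₀ x₂ :=
      mul_nonneg (mul_nonneg (mul_nonneg (hFnn x₂) (hfnn x₁)) (hF₀nn x₁)) (hf₀nn x₂)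
    have u4 : F x₂ * f x₁ * F₀ x₁ * f₀ x₂ ≤ f x₁ * f₀ x₂ := by
      calc F x₂ * f x₁ * F₀ x₁ * f₀ x₂ = (F x₂ * F₀ x₁) * (f x₁ * f₀ x₂) := by ring
        _ ≤ f x₁ * f₀ x₂ := mul_le_of_le_one_left
              (mul_nonneg (hfnn x₁) (hf₀nn x₂))
              (mul_le_one₀ (hFle x₂) (hF₀nn x₁) (hF₀le x₁))
    rw [Real.norm_eq_abs, abs_le]
    constructor <;> linarith
  -- nonnegativity of the integral
  have hnonneg : 0 ≤ ∫ p in S, g p :=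
    setIntegral_nonneg hSmeas hgnn
  refine ⟨hnonneg, ?_⟩
  rintro ⟨a, b, ha, hab, hstrict⟩
  -- the open triangle inside (a,b)
  set T : Set (ℝ × ℝ) := (Set.Ioo a b ×ˢ Set.Ioo a b) ∩ {p : ℝ × ℝ | p.1 < p.2} with hT
  have hTopen : IsOpen T :=
    ((isOpen_Ioo.prod isOpen_Ioo)).inter (isOpen_lt continuous_fst continuous_snd)
  have hTne : T.Nonempty := by
    refine ⟨((2*a+b)/3, (a+2*b)/3), ?_⟩
    constructor
    · constructor <;> constructor <;> · simp only [Set.mem_Ioo]; linarith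
    · show (2*a+b)/3 < (a+2*b)/3; linarith
  have hTS : T ⊆ S := by
    rintro ⟨x₁, x₂⟩ ⟨⟨h1, _⟩, h3⟩
    exact ⟨lt_of_le_of_lt ha h1.1, h3⟩
  have hTsupp : T ⊆ Function.support g ∩ S := by
    rintro ⟨x₁, x₂⟩ hp
    obtain ⟨⟨hx₁, hx₂⟩, h3⟩ := hp
    refine ⟨?_, hTS ⟨⟨hx₁, hx₂⟩, h3⟩⟩
    have h1 : (0:ℝ) < x₁ := lt_of_le_of_lt ha hx₁.1
    have h2 : (0:ℝ) < x₂ := h1.trans h3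
    have hc₁ : 0 < F x₁ * f₀ x₁ := mul_pos (hFpos _ h1) (hf₀pos _ h1)
    have hc₂ : 0 < F x₂ * f₀ x₂ := mul_pos (hFpos _ h2) (hf₀pos _ h2)
    have hrlt : r x₁ < r x₂ := hstrict hx₁ hx₂ h3
    have heq : g (x₁, x₂) = (F x₁ * f₀ x₁) * (F x₂ * f₀ x₂) * (r x₂ - r x₁) := by
      have e1 := hkey x₁ h1
      have e2 := hkey x₂ h2
      simp only [hg]
      calc F x₁ * f x₂ * F₀ x₂ * f₀ x₁ - F x₂ * f x₁ * F₀ x₁ * f₀ x₂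
          = F x₁ * f₀ x₁ * (f x₂ * F₀ x₂) - F x₂ * f₀ x₂ * (f x₁ * F₀ x₁) := by ring
        _ = F x₁ * f₀ x₁ * (r x₂ * (F x₂ * f₀ x₂))
              - F x₂ * f₀ x₂ * (r x₁ * (F x₁ * f₀ x₁)) := by rw [e1, e2]
        _ = F x₁ * f₀ x₁ * (F x₂ * f₀ x₂) * (r x₂ - r x₁) := by ring
    have : 0 < g (x₁, x₂) := by
      rw [heq]
      exact mul_pos (mul_pos hc₁ hc₂) (sub_pos.2 hrlt)
    exact this.ne'
  rw [setIntegral_pos_iff_support_of_nonneg_ae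
    (ae_restrict_of_forall_mem hSmeas hgnn) hgI.integrableOn]
  calc (0:ENNReal) < volume T := hTopen.measure_pos volume hTne
    _ ≤ volume (Function.support g ∩ S) := measure_mono hTsupp
end

section
/- Let θ > 0, let F₀ be a continuous and strictly increasing distribution function on [0,∞), and set F = F₀^θ. Let X₁, X₂, Y₂ be independent with X₁, X₂ distributed according to F₀ and Y₂ according to F, and let φ be the symmetrized kernel. Then for any y with 0 < F(y) < 1: E[φ(X₁, X₂, y, Y₂)] = (1/2)[θ²/((2+θ)(1+θ)) − F(y)^{1/θ} + (4/(2+θ))·F(y)^{1+2/θ}]. -/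
open MeasureTheory ProbabilityTheory

/-- The kernel `f(x₁,x₂,y₁,y₂) = 1{x₁ < y₁, y₂ < x₂ < y₁} − 1{y₁ < x₁, x₂ < y₂ < x₁}`. -/
noncomputable def prhrKernel (x₁ x₂ y₁ y₂ : ℝ) : ℝ :=
  (if x₁ < y₁ ∧ y₂ < x₂ ∧ x₂ < y₁ then 1 else 0) -
    (if y₁ < x₁ ∧ x₂ < y₂ ∧ y₂ < x₁ then 1 else 0)

/-- The symmetrized kernel `φ`. -/
noncomputable def prhrSymKernel (x₁ x₂ y₁ y₂ : ℝ) : ℝ :=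
  (prhrKernel x₁ x₂ y₁ y₂ + prhrKernel x₂ x₁ y₁ y₂ +
    prhrKernel x₁ x₂ y₂ y₁ + prhrKernel x₂ x₁ y₂ y₁) / 4

open Set

lemma integrable_bdd {α : Type*} [MeasurableSpace α] {μ : Measure α} [IsFiniteMeasure μ]
    {f : α → ℝ} (hm : AEStronglyMeasurable f μ) (hb : ∀ x, ‖f x‖ ≤ 1) : Integrable f μ :=
  Integrable.mono' (integrable_const 1) hm (Filter.Eventually.of_forall hb)

lemma int_lam_lt {c β : ℝ} (hc0 : 0 ≤ c) (hc1 : c ≤ 1) (hβ : 0 ≤ β) :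
    ∫ t in Ioo (0:ℝ) 1, (if t < c then t ^ β else 0) = c ^ (β + 1) / (β + 1) := by
  have h1 : (fun t : ℝ => (if t < c then t ^ β else 0)) =
      (Iio c).indicator (fun t : ℝ => t ^ β) := by
    funext t; simp [indicator_apply]
  rw [h1, setIntegral_indicator measurableSet_Iio]
  have h2 : Ioo (0:ℝ) 1 ∩ Iio c = Ioo 0 c := by
    rw [Set.Ioo_inter_Iio, min_eq_right hc1]
  rw [h2, ← integral_Ioc_eq_integral_Ioo, ← intervalIntegral.integral_of_le hc0,
    integral_rpow (Or.inl (by linarith)), Real.zero_rpow (by positivity)]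
  ring

lemma int_lam_gt {c β : ℝ} (hc0 : 0 ≤ c) (hc1 : c ≤ 1) (hβ : 0 ≤ β) :
    ∫ t in Ioo (0:ℝ) 1, (if c < t then t ^ β else 0) = (1 - c ^ (β + 1)) / (β + 1) := by
  have h1 : (fun t : ℝ => (if c < t then t ^ β else 0)) =
      (Ioi c).indicator (fun t : ℝ => t ^ β) := by
    funext t; simp [indicator_apply]
  rw [h1, setIntegral_indicator measurableSet_Ioi]
  have h2 : Ioo (0:ℝ) 1 ∩ Ioi c = Ioo c 1 := by
    rw [Set.Ioo_inter_Ioi, max_eq_right hc0]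
  rw [h2, ← integral_Ioc_eq_integral_Ioo, ← intervalIntegral.integral_of_le hc1,
    integral_rpow (Or.inl (by linarith)), Real.one_rpow]

lemma int_lam_lt_one {c : ℝ} (hc0 : 0 ≤ c) (hc1 : c ≤ 1) :
    ∫ t in Ioo (0:ℝ) 1, (if t < c then (1:ℝ) else 0) = c := by
  have h := int_lam_lt (β := 0) hc0 hc1 le_rfl
  simp only [Real.rpow_zero, zero_add, Real.rpow_one, div_one] at h
  exact h

lemma int_lam_gt_one {c : ℝ} (hc0 : 0 ≤ c) (hc1 : c ≤ 1) :
    ∫ t in Ioo (0:ℝ) 1, (if c < t then (1:ℝ) else 0) = 1 - c := by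
  have h := int_lam_gt (β := 0) hc0 hc1 le_rfl
  simp only [Real.rpow_zero, zero_add, Real.rpow_one, div_one] at h
  exact h

lemma lam_prob : IsProbabilityMeasure (volume.restrict (Ioo (0:ℝ) 1)) := by
  constructor
  rw [Measure.restrict_apply_univ, Real.volume_Ioo]
  norm_num

lemma measurable_rinv (θ : ℝ) : Measurable fun t : ℝ => t ^ θ⁻¹ :=
  measurable_id.pow_const θ⁻¹

lemma termA1 (θ q : ℝ) (hθ : 0 < θ) (hq0 : 0 < q) (hq1 : q < 1) :
    ∫ p : ℝ × ℝ × ℝ, (if p.1 < q ∧ p.2.2 < p.2.1 ∧ p.2.1 < q then (1:ℝ) else 0)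
      ∂((volume.restrict (Ioo 0 1)).prod ((volume.restrict (Ioo 0 1)).prod
        (Measure.map (fun t : ℝ => t ^ θ⁻¹) (volume.restrict (Ioo 0 1))))) =
    q * (q ^ (θ + 1) / (θ + 1)) := by
  have hrθ : Measurable fun t : ℝ => t ^ θ⁻¹ := measurable_rinv θ
  set lam : Measure ℝ := volume.restrict (Ioo 0 1) with hlam
  set ν : Measure ℝ := Measure.map (fun t : ℝ => t ^ θ⁻¹) lam with hν
  haveI : IsProbabilityMeasure lam := lam_prob
  haveI : IsProbabilityMeasure ν := Measure.isProbabilityMeasure_map hrθ.aemeasurable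
  set F : ℝ × ℝ × ℝ → ℝ :=
    fun p => if p.1 < q ∧ p.2.2 < p.2.1 ∧ p.2.1 < q then (1:ℝ) else 0 with hF
  have hSm : MeasurableSet {p : ℝ × ℝ × ℝ | p.1 < q ∧ p.2.2 < p.2.1 ∧ p.2.1 < q} := by
    exact (measurableSet_lt measurable_fst measurable_const).inter
      ((measurableSet_lt measurable_snd.snd measurable_snd.fst).inter
        (measurableSet_lt measurable_snd.fst measurable_const))
  have hFm : Measurable F := Measurable.ite hSm measurable_const measurable_const
  have hFb : ∀ p, ‖F p‖ ≤ 1 := by intro p; rw [hF]; dsimp only; split_ifs <;> simp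
  have hInt : Integrable F (lam.prod (lam.prod ν)) :=
    integrable_bdd hFm.aestronglyMeasurable hFb
  rw [integral_prod _ hInt]
  have key : EqOn (fun u₁ => ∫ z, F (u₁, z) ∂(lam.prod ν))
      (fun u₁ => (if u₁ < q then 1 else 0) * (q ^ (θ + 1) / (θ + 1))) (Ioo 0 1) := by
    intro u₁ _
    have hInt2 : Integrable (fun z => F (u₁, z)) (lam.prod ν) :=
      integrable_bdd (hFm.comp measurable_prodMk_left).aestronglyMeasurable fun z => hFb _
    dsimp only
    rw [integral_prod _ hInt2]
    by_cases h1 : u₁ < q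
    · have inner : EqOn (fun u₂ => ∫ w, F (u₁, (u₂, w)) ∂ν)
          (fun u₂ => if u₂ < q then u₂ ^ θ else 0) (Ioo 0 1) := by
        intro u₂ hu₂
        have hm : Measurable fun w : ℝ => F (u₁, (u₂, w)) :=
          hFm.comp (measurable_const.prodMk (measurable_const.prodMk measurable_id))
        dsimp only
        rw [hν, integral_map hrθ.aemeasurable hm.aestronglyMeasurable]
        by_cases h2 : u₂ < q
        · have e : EqOn (fun t : ℝ => F (u₁, (u₂, t ^ θ⁻¹)))
              (fun t => if t < u₂ ^ θ then (1:ℝ) else 0) (Ioo 0 1) := by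
            intro t ht
            simp only [hF]
            simp [h1, h2, Real.rpow_inv_lt_iff_of_pos ht.1.le hu₂.1.le hθ]
          rw [setIntegral_congr_fun measurableSet_Ioo e,
            int_lam_lt_one (Real.rpow_nonneg hu₂.1.le θ)
              (Real.rpow_le_one hu₂.1.le hu₂.2.le hθ.le), if_pos h2]
        · have e : ∀ t : ℝ, F (u₁, (u₂, t ^ θ⁻¹)) = 0 := by
            intro t; simp only [hF]
            rw [if_neg]; rintro ⟨-, -, h⟩; exact h2 h
          simp only [e, integral_zero, if_neg h2]
      rw [setIntegral_congr_fun measurableSet_Ioo inner, int_lam_lt hq0.le hq1.le hθ.le,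
        if_pos h1, one_mul]
    · have : ∀ z : ℝ × ℝ, F (u₁, z) = 0 := by
        intro z; rw [hF]; dsimp only
        rw [if_neg]; rintro ⟨h, -⟩; exact h1 h
      simp only [this, integral_zero, if_neg h1, zero_mul]
  rw [setIntegral_congr_fun measurableSet_Ioo key, integral_mul_const,
    int_lam_lt_one hq0.le hq1.le]

lemma termC2 (θ q : ℝ) (hθ : 0 < θ) (hq0 : 0 < q) (hq1 : q < 1) :
    ∫ p : ℝ × ℝ × ℝ, (if p.2.2 < p.1 ∧ p.2.1 < q ∧ q < p.1 then (1:ℝ) else 0)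
      ∂((volume.restrict (Ioo 0 1)).prod ((volume.restrict (Ioo 0 1)).prod
        (Measure.map (fun t : ℝ => t ^ θ⁻¹) (volume.restrict (Ioo 0 1))))) =
    q * ((1 - q ^ (θ + 1)) / (θ + 1)) := by
  have hrθ : Measurable fun t : ℝ => t ^ θ⁻¹ := measurable_rinv θ
  set lam : Measure ℝ := volume.restrict (Ioo 0 1) with hlam
  set ν : Measure ℝ := Measure.map (fun t : ℝ => t ^ θ⁻¹) lam with hν
  haveI : IsProbabilityMeasure lam := lam_prob
  haveI : IsProbabilityMeasure ν := Measure.isProbabilityMeasure_map hrθ.aemeasurable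
  set F : ℝ × ℝ × ℝ → ℝ :=
    fun p => if p.2.2 < p.1 ∧ p.2.1 < q ∧ q < p.1 then (1:ℝ) else 0 with hF
  have hSm : MeasurableSet {p : ℝ × ℝ × ℝ | p.2.2 < p.1 ∧ p.2.1 < q ∧ q < p.1} :=
    (measurableSet_lt measurable_snd.snd measurable_fst).inter
      ((measurableSet_lt measurable_snd.fst measurable_const).inter
        (measurableSet_lt measurable_const measurable_fst))
  have hFm : Measurable F := Measurable.ite hSm measurable_const measurable_const
  have hFb : ∀ p, ‖F p‖ ≤ 1 := by intro p; rw [hF]; dsimp only; split_ifs <;> simp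
  have hInt : Integrable F (lam.prod (lam.prod ν)) :=
    integrable_bdd hFm.aestronglyMeasurable hFb
  rw [integral_prod _ hInt]
  have key : EqOn (fun u₁ => ∫ z, F (u₁, z) ∂(lam.prod ν))
      (fun u₁ => q * (if q < u₁ then u₁ ^ θ else 0)) (Ioo 0 1) := by
    intro u₁ hu₁
    have hInt2 : Integrable (fun z => F (u₁, z)) (lam.prod ν) :=
      integrable_bdd (hFm.comp measurable_prodMk_left).aestronglyMeasurable fun z => hFb _
    dsimp only
    rw [integral_prod _ hInt2]
    by_cases h1 : q < u₁
    · have inner : EqOn (fun u₂ => ∫ w, F (u₁, (u₂, w)) ∂ν)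
          (fun u₂ => if u₂ < q then u₁ ^ θ else 0) (Ioo 0 1) := by
        intro u₂ hu₂
        have hm : Measurable fun w : ℝ => F (u₁, (u₂, w)) :=
          hFm.comp (measurable_const.prodMk (measurable_const.prodMk measurable_id))
        dsimp only
        rw [hν, integral_map hrθ.aemeasurable hm.aestronglyMeasurable]
        by_cases h2 : u₂ < q
        · have e : EqOn (fun t : ℝ => F (u₁, (u₂, t ^ θ⁻¹)))
              (fun t => if t < u₁ ^ θ then (1:ℝ) else 0) (Ioo 0 1) := by
            intro t ht
            simp only [hF]
            simp [h1, h2, Real.rpow_inv_lt_iff_of_pos ht.1.le hu₁.1.le hθ]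
          rw [setIntegral_congr_fun measurableSet_Ioo e,
            int_lam_lt_one (Real.rpow_nonneg hu₁.1.le θ)
              (Real.rpow_le_one hu₁.1.le hu₁.2.le hθ.le), if_pos h2]
        · have e : ∀ t : ℝ, F (u₁, (u₂, t ^ θ⁻¹)) = 0 := by
            intro t; simp only [hF]
            rw [if_neg]; rintro ⟨-, h, -⟩; exact h2 h
          simp only [e, integral_zero, if_neg h2]
      rw [setIntegral_congr_fun measurableSet_Ioo inner]
      have e2 : EqOn (fun u₂ : ℝ => if u₂ < q then u₁ ^ θ else 0)
          (fun u₂ : ℝ => u₁ ^ θ * (if u₂ < q then (1:ℝ) else 0)) (Ioo 0 1) := by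
        intro u₂ _; dsimp only; split_ifs <;> simp
      rw [setIntegral_congr_fun measurableSet_Ioo e2, integral_const_mul,
        int_lam_lt_one hq0.le hq1.le, if_pos h1]
      ring
    · have e0 : ∀ z : ℝ × ℝ, F (u₁, z) = 0 := by
        intro z; rw [hF]; dsimp only
        rw [if_neg]; rintro ⟨-, -, h⟩; exact h1 h
      simp only [e0, integral_zero, if_neg h1, mul_zero]
  rw [setIntegral_congr_fun measurableSet_Ioo key, integral_const_mul,
    int_lam_gt hq0.le hq1.le hθ.le]

lemma termA2 (θ q : ℝ) (hθ : 0 < θ) (hq0 : 0 < q) (hq1 : q < 1) :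
    ∫ p : ℝ × ℝ × ℝ, (if q < p.1 ∧ p.2.1 < p.2.2 ∧ p.2.2 < p.1 then (1:ℝ) else 0)
      ∂((volume.restrict (Ioo 0 1)).prod ((volume.restrict (Ioo 0 1)).prod
        (Measure.map (fun t : ℝ => t ^ θ⁻¹) (volume.restrict (Ioo 0 1))))) =
    (1 - q ^ (θ + 1 + 1)) / (θ + 1 + 1) * (θ⁻¹ + 1)⁻¹ := by
  have hrθ : Measurable fun t : ℝ => t ^ θ⁻¹ := measurable_rinv θ
  set lam : Measure ℝ := volume.restrict (Ioo 0 1) with hlam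
  set ν : Measure ℝ := Measure.map (fun t : ℝ => t ^ θ⁻¹) lam with hν
  haveI : IsProbabilityMeasure lam := lam_prob
  haveI : IsProbabilityMeasure ν := Measure.isProbabilityMeasure_map hrθ.aemeasurable
  set F : ℝ × ℝ × ℝ → ℝ :=
    fun p => if q < p.1 ∧ p.2.1 < p.2.2 ∧ p.2.2 < p.1 then (1:ℝ) else 0 with hF
  have hSm : MeasurableSet {p : ℝ × ℝ × ℝ | q < p.1 ∧ p.2.1 < p.2.2 ∧ p.2.2 < p.1} :=
    (measurableSet_lt measurable_const measurable_fst).inter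
      ((measurableSet_lt measurable_snd.fst measurable_snd.snd).inter
        (measurableSet_lt measurable_snd.snd measurable_fst))
  have hFm : Measurable F := Measurable.ite hSm measurable_const measurable_const
  have hFb : ∀ p, ‖F p‖ ≤ 1 := by intro p; rw [hF]; dsimp only; split_ifs <;> simp
  have hInt : Integrable F (lam.prod (lam.prod ν)) :=
    integrable_bdd hFm.aestronglyMeasurable hFb
  rw [integral_prod _ hInt]
  have key : EqOn (fun u₁ => ∫ z, F (u₁, z) ∂(lam.prod ν))
      (fun u₁ => (if q < u₁ then u₁ ^ (θ + 1) else 0) * (θ⁻¹ + 1)⁻¹) (Ioo 0 1) := by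
    intro u₁ hu₁
    have hInt2 : Integrable (fun z => F (u₁, z)) (lam.prod ν) :=
      integrable_bdd (hFm.comp measurable_prodMk_left).aestronglyMeasurable fun z => hFb _
    dsimp only
    rw [integral_prod_symm _ hInt2]
    by_cases h1 : q < u₁
    · have hsm : AEStronglyMeasurable (fun w : ℝ => ∫ u₂, F (u₁, (u₂, w)) ∂lam) ν := by
        have : StronglyMeasurable fun z : ℝ × ℝ => F (u₁, z) :=
          (hFm.comp measurable_prodMk_left).stronglyMeasurable
        exact this.integral_prod_left'.aestronglyMeasurable
      rw [hν, integral_map hrθ.aemeasurable hsm]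
      have e : EqOn (fun t : ℝ => ∫ u₂, F (u₁, (u₂, t ^ θ⁻¹)) ∂lam)
          (fun t => if t < u₁ ^ θ then t ^ θ⁻¹ else 0) (Ioo 0 1) := by
        intro t ht
        have hs0 : (0:ℝ) ≤ t ^ θ⁻¹ := Real.rpow_nonneg ht.1.le _
        have hs1 : t ^ θ⁻¹ ≤ 1 := Real.rpow_le_one ht.1.le ht.2.le (by positivity)
        have hiff : t ^ θ⁻¹ < u₁ ↔ t < u₁ ^ θ :=
          Real.rpow_inv_lt_iff_of_pos ht.1.le hu₁.1.le hθ
        dsimp only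
        by_cases h2 : t < u₁ ^ θ
        · have e2 : (fun u₂ : ℝ => F (u₁, (u₂, t ^ θ⁻¹))) =
              fun u₂ => if u₂ < t ^ θ⁻¹ then (1:ℝ) else 0 := by
            funext u₂; simp only [hF]
            simp [h1, hiff.mpr h2]
          rw [e2, int_lam_lt_one hs0 hs1, if_pos h2]
        · have e2 : (fun u₂ : ℝ => F (u₁, (u₂, t ^ θ⁻¹))) = fun _ => (0:ℝ) := by
            funext u₂; simp only [hF]
            rw [if_neg]; rintro ⟨-, -, h⟩; exact h2 (hiff.mp h)
          rw [e2, integral_zero, if_neg h2]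
      rw [setIntegral_congr_fun measurableSet_Ioo e,
        int_lam_lt (Real.rpow_nonneg hu₁.1.le θ)
          (Real.rpow_le_one hu₁.1.le hu₁.2.le hθ.le) (by positivity)]
      rw [if_pos h1, ← Real.rpow_mul hu₁.1.le]
      have hexp : θ * (θ⁻¹ + 1) = θ + 1 := by
        rw [mul_add, mul_inv_cancel₀ hθ.ne', mul_one, add_comm]
      rw [hexp, div_eq_mul_inv]
    · have e0 : ∀ w u₂ : ℝ, F (u₁, (u₂, w)) = 0 := by
        intro w u₂; rw [hF]; dsimp only
        rw [if_neg]; rintro ⟨h, -⟩; exact h1 h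
      simp only [e0, integral_zero, if_neg h1, zero_mul]
  rw [setIntegral_congr_fun measurableSet_Ioo key, integral_mul_const,
    int_lam_gt hq0.le hq1.le (by positivity)]

noncomputable def swap12Equiv : (ℝ × ℝ × ℝ) ≃ᵐ (ℝ × ℝ × ℝ) :=
  (MeasurableEquiv.prodAssoc.symm.trans
    ((MeasurableEquiv.prodComm (α := ℝ) (β := ℝ)).prodCongr (MeasurableEquiv.refl ℝ))).trans
    MeasurableEquiv.prodAssoc

noncomputable def rotEquiv : (ℝ × ℝ × ℝ) ≃ᵐ (ℝ × ℝ × ℝ) :=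
  MeasurableEquiv.prodAssoc.symm.trans (MeasurableEquiv.prodComm (α := ℝ × ℝ) (β := ℝ))

lemma integral_swap12 (μ₁ μ₂ μ₃ : Measure ℝ) [IsProbabilityMeasure μ₁]
    [IsProbabilityMeasure μ₂] [IsProbabilityMeasure μ₃] (f : ℝ × ℝ × ℝ → ℝ) :
    ∫ p, f p ∂(μ₁.prod (μ₂.prod μ₃)) =
      ∫ p, f (p.2.1, (p.1, p.2.2)) ∂(μ₂.prod (μ₁.prod μ₃)) := by
  have h1 : MeasurePreserving (MeasurableEquiv.prodAssoc.symm : (ℝ × ℝ × ℝ) ≃ᵐ (ℝ × ℝ) × ℝ)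
      (μ₂.prod (μ₁.prod μ₃)) ((μ₂.prod μ₁).prod μ₃) :=
    MeasurePreserving.symm _ (measurePreserving_prodAssoc μ₂ μ₁ μ₃)
  have h2 : MeasurePreserving (Prod.map (Prod.swap : ℝ × ℝ → ℝ × ℝ) (id : ℝ → ℝ))
      ((μ₂.prod μ₁).prod μ₃) ((μ₁.prod μ₂).prod μ₃) :=
    (Measure.measurePreserving_swap (μ := μ₂) (ν := μ₁)).prod (MeasurePreserving.id μ₃)
  have h3 := measurePreserving_prodAssoc μ₁ μ₂ μ₃
  have he : MeasurePreserving (swap12Equiv : (ℝ × ℝ × ℝ) ≃ᵐ (ℝ × ℝ × ℝ))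
      (μ₂.prod (μ₁.prod μ₃)) (μ₁.prod (μ₂.prod μ₃)) := (h3.comp h2).comp h1
  refine Eq.symm ?_
  rw [show (fun p : ℝ × ℝ × ℝ => f (p.2.1, (p.1, p.2.2)))
      = (fun p => f (swap12Equiv p)) from rfl]
  exact he.integral_comp' f

lemma integral_rot (μ₁ μ₂ μ₃ : Measure ℝ) [IsProbabilityMeasure μ₁]
    [IsProbabilityMeasure μ₂] [IsProbabilityMeasure μ₃] (f : ℝ × ℝ × ℝ → ℝ) :
    ∫ p, f p ∂(μ₁.prod (μ₂.prod μ₃)) =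
      ∫ p, f (p.2.2, (p.1, p.2.1)) ∂(μ₂.prod (μ₃.prod μ₁)) := by
  have h1 : MeasurePreserving (MeasurableEquiv.prodAssoc.symm : (ℝ × ℝ × ℝ) ≃ᵐ (ℝ × ℝ) × ℝ)
      (μ₂.prod (μ₃.prod μ₁)) ((μ₂.prod μ₃).prod μ₁) :=
    MeasurePreserving.symm _ (measurePreserving_prodAssoc μ₂ μ₃ μ₁)
  have h2 : MeasurePreserving (Prod.swap : (ℝ × ℝ) × ℝ → ℝ × ℝ × ℝ)
      ((μ₂.prod μ₃).prod μ₁) (μ₁.prod (μ₂.prod μ₃)) := Measure.measurePreserving_swap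
  have he : MeasurePreserving (rotEquiv : (ℝ × ℝ × ℝ) ≃ᵐ (ℝ × ℝ × ℝ))
      (μ₂.prod (μ₃.prod μ₁)) (μ₁.prod (μ₂.prod μ₃)) := h2.comp h1
  refine Eq.symm ?_
  rw [show (fun p : ℝ × ℝ × ℝ => f (p.2.2, (p.1, p.2.1)))
      = (fun p => f (rotEquiv p)) from rfl]
  exact he.integral_comp' f

lemma termC1 (θ q : ℝ) (hθ : 0 < θ) (hq0 : 0 < q) (hq1 : q < 1) :
    ∫ p : ℝ × ℝ × ℝ, (if p.1 < p.2.2 ∧ q < p.2.1 ∧ p.2.1 < p.2.2 then (1:ℝ) else 0)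
      ∂((volume.restrict (Ioo 0 1)).prod ((volume.restrict (Ioo 0 1)).prod
        (Measure.map (fun t : ℝ => t ^ θ⁻¹) (volume.restrict (Ioo 0 1))))) =
    ((1 - q) - (1 - q ^ (θ + 1 + 1)) / (θ + 1 + 1)) * (θ⁻¹ + 1)⁻¹ := by
  have hrθ : Measurable fun t : ℝ => t ^ θ⁻¹ := measurable_rinv θ
  set lam : Measure ℝ := volume.restrict (Ioo 0 1) with hlam
  set ν : Measure ℝ := Measure.map (fun t : ℝ => t ^ θ⁻¹) lam with hν
  haveI : IsProbabilityMeasure lam := lam_prob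
  haveI : IsProbabilityMeasure ν := Measure.isProbabilityMeasure_map hrθ.aemeasurable
  rw [integral_rot lam lam ν]
  set F : ℝ × ℝ × ℝ → ℝ :=
    fun p => if p.2.2 < p.2.1 ∧ q < p.1 ∧ p.1 < p.2.1 then (1:ℝ) else 0 with hF
  have hSm : MeasurableSet {p : ℝ × ℝ × ℝ | p.2.2 < p.2.1 ∧ q < p.1 ∧ p.1 < p.2.1} :=
    (measurableSet_lt measurable_snd.snd measurable_snd.fst).inter
      ((measurableSet_lt measurable_const measurable_fst).inter
        (measurableSet_lt measurable_fst measurable_snd.fst))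
  have hFm : Measurable F := Measurable.ite hSm measurable_const measurable_const
  have hFb : ∀ p, ‖F p‖ ≤ 1 := by intro p; rw [hF]; dsimp only; split_ifs <;> simp
  have hInt : Integrable F (lam.prod (ν.prod lam)) :=
    integrable_bdd hFm.aestronglyMeasurable hFb
  rw [integral_prod _ hInt]
  have key : EqOn (fun u₂ => ∫ z, F (u₂, z) ∂(ν.prod lam))
      (fun u₂ => ((if q < u₂ then (1:ℝ) else 0) - (if q < u₂ then u₂ ^ (θ + 1) else 0))
        * (θ⁻¹ + 1)⁻¹) (Ioo 0 1) := by
    intro u₂ hu₂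
    have hInt2 : Integrable (fun z => F (u₂, z)) (ν.prod lam) :=
      integrable_bdd (hFm.comp measurable_prodMk_left).aestronglyMeasurable fun z => hFb _
    dsimp only
    rw [integral_prod _ hInt2]
    by_cases h1 : q < u₂
    · have hsm : AEStronglyMeasurable (fun w : ℝ => ∫ u₁, F (u₂, (w, u₁)) ∂lam) ν := by
        have : StronglyMeasurable fun z : ℝ × ℝ => F (u₂, z) :=
          (hFm.comp measurable_prodMk_left).stronglyMeasurable
        exact this.integral_prod_right'.aestronglyMeasurable
      rw [hν, integral_map hrθ.aemeasurable hsm]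
      have e : EqOn (fun t : ℝ => ∫ u₁, F (u₂, (t ^ θ⁻¹, u₁)) ∂lam)
          (fun t => if u₂ ^ θ < t then t ^ θ⁻¹ else 0) (Ioo 0 1) := by
        intro t ht
        have hs0 : (0:ℝ) ≤ t ^ θ⁻¹ := Real.rpow_nonneg ht.1.le _
        have hs1 : t ^ θ⁻¹ ≤ 1 := Real.rpow_le_one ht.1.le ht.2.le (by positivity)
        have hiff : u₂ < t ^ θ⁻¹ ↔ u₂ ^ θ < t :=
          Real.lt_rpow_inv_iff_of_pos hu₂.1.le ht.1.le hθ
        dsimp only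
        by_cases h2 : u₂ ^ θ < t
        · have e2 : (fun u₁ : ℝ => F (u₂, (t ^ θ⁻¹, u₁))) =
              fun u₁ => if u₁ < t ^ θ⁻¹ then (1:ℝ) else 0 := by
            funext u₁; simp only [hF]
            simp [h1, hiff.mpr h2]
          rw [e2, int_lam_lt_one hs0 hs1, if_pos h2]
        · have e2 : (fun u₁ : ℝ => F (u₂, (t ^ θ⁻¹, u₁))) = fun _ => (0:ℝ) := by
            funext u₁; simp only [hF]
            rw [if_neg]; rintro ⟨-, -, h⟩; exact h2 (hiff.mp h)
          rw [e2, integral_zero, if_neg h2]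
      rw [setIntegral_congr_fun measurableSet_Ioo e,
        int_lam_gt (Real.rpow_nonneg hu₂.1.le θ)
          (Real.rpow_le_one hu₂.1.le hu₂.2.le hθ.le) (by positivity),
        ← Real.rpow_mul hu₂.1.le]
      have hexp : θ * (θ⁻¹ + 1) = θ + 1 := by
        rw [mul_add, mul_inv_cancel₀ hθ.ne', mul_one, add_comm]
      rw [hexp, if_pos h1, if_pos h1, div_eq_mul_inv]
    · have e0 : ∀ w u₁ : ℝ, F (u₂, (w, u₁)) = 0 := by
        intro w u₁; rw [hF]; dsimp only
        rw [if_neg]; rintro ⟨-, h, -⟩; exact h1 h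
      simp only [e0, integral_zero, if_neg h1, sub_zero, zero_mul]
  rw [setIntegral_congr_fun measurableSet_Ioo key, integral_mul_const]
  have hI1 : Integrable (fun u₂ : ℝ => if q < u₂ then (1:ℝ) else 0) lam :=
    integrable_bdd ((Measurable.ite (measurableSet_lt measurable_const measurable_id)
      measurable_const measurable_const)).aestronglyMeasurable
      (fun x => by split_ifs <;> simp)
  have hI2 : Integrable (fun u₂ : ℝ => if q < u₂ then u₂ ^ (θ + 1) else 0) lam := by
    refine (integrable_const (1:ℝ)).mono'
      ((Measurable.ite (measurableSet_lt measurable_const measurable_id)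
        (measurable_id.pow_const _) measurable_const)).aestronglyMeasurable ?_
    rw [hlam, ae_restrict_iff' measurableSet_Ioo]
    refine Filter.Eventually.of_forall fun x hx => ?_
    split_ifs
    · rw [Real.norm_eq_abs, abs_of_nonneg (Real.rpow_nonneg hx.1.le _)]
      exact Real.rpow_le_one hx.1.le hx.2.le (by positivity)
    · simp
  rw [integral_sub hI1 hI2, int_lam_gt_one hq0.le hq1.le,
    int_lam_gt hq0.le hq1.le (by positivity)]

lemma law_map {Ω : Type*} [MeasureSpace Ω] [IsProbabilityMeasure (ℙ : Measure Ω)]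
    (G : ℝ → ℝ) (hGc : Continuous G) (hGm : StrictMonoOn G (Set.Ici 0))
    (hGnn : ∀ x, 0 ≤ G x) (hG1 : ∀ x, G x ≤ 1)
    (c : ℝ) (hc : 0 < c) (Z : Ω → ℝ) (hZm : Measurable Z) (hZnn : ∀ ω, 0 ≤ Z ω)
    (hcdf : ∀ x, (ℙ {ω | Z ω ≤ x}).toReal = G x ^ c) :
    Measure.map (fun ω => G (Z ω)) ℙ
      = Measure.map (fun t : ℝ => t ^ c⁻¹) (volume.restrict (Ioo 0 1)) := by
  have hGZm : Measurable fun ω => G (Z ω) := hGc.measurable.comp hZm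
  have hrc : Measurable fun t : ℝ => t ^ c⁻¹ := measurable_rinv c
  -- G vanishes on negatives
  have hneg : ∀ x : ℝ, x < 0 → G x = 0 := by
    intro x hx
    have hempty : {ω : Ω | Z ω ≤ x} = ∅ := by
      apply Set.eq_empty_iff_forall_notMem.mpr
      intro ω hω
      exact absurd (le_trans (hZnn ω) hω) (not_le.mpr hx)
    have := hcdf x
    rw [hempty] at this
    simp only [measure_empty, ENNReal.toReal_zero] at this
    exact ((Real.rpow_eq_zero (hGnn x) hc.ne').mp this.symm)
  have hG0 : G 0 = 0 := by
    have h1 : Filter.Tendsto (fun n : ℕ => G (-(1 / (n + 1)))) Filter.atTop (nhds (G 0)) := by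
      have h2 : Filter.Tendsto (fun n : ℕ => -(1 / ((n : ℝ) + 1))) Filter.atTop (nhds 0) := by
        rw [show (0:ℝ) = -0 by norm_num]
        exact (tendsto_one_div_add_atTop_nhds_zero_nat).neg
      exact (hGc.continuousAt.tendsto).comp h2
    have h3 : (fun n : ℕ => G (-(1 / (n + 1)))) = fun _ => (0:ℝ) := by
      funext n
      exact hneg _ (neg_lt_zero.mpr (by positivity))
    rw [h3] at h1
    exact tendsto_nhds_unique h1 tendsto_const_nhds
  -- surjectivity onto [0,1)
  have hsurj : ∀ u : ℝ, 0 ≤ u → u < 1 → ∃ x₀ : ℝ, 0 ≤ x₀ ∧ G x₀ = u := by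
    intro u hu0 hu1
    have hn : ∃ n : ℕ, u < G n := by
      by_contra hcon
      push_neg at hcon
      have hmono : Monotone fun n : ℕ => {ω : Ω | Z ω ≤ (n:ℝ)} := by
        intro a b hab ω hω
        simp only [Set.mem_setOf_eq] at *
        exact le_trans hω (Nat.cast_le.mpr hab)
      have hunion : ⋃ n : ℕ, {ω : Ω | Z ω ≤ (n:ℝ)} = Set.univ := by
        apply Set.eq_univ_iff_forall.mpr; intro ω
        obtain ⟨n, hn⟩ := exists_nat_ge (Z ω)
        exact Set.mem_iUnion.mpr ⟨n, hn⟩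
      have ht := tendsto_measure_iUnion_atTop (μ := ℙ)
        (s := fun n : ℕ => {ω : Ω | Z ω ≤ (n:ℝ)}) hmono
      rw [hunion, measure_univ] at ht
      have ht2 : Filter.Tendsto (fun n : ℕ => (ℙ {ω : Ω | Z ω ≤ (n:ℝ)}).toReal)
          Filter.atTop (nhds 1) := by
        have := (ENNReal.tendsto_toReal ENNReal.one_ne_top).comp ht
        exact this
      have hle : ∀ n : ℕ, (ℙ {ω : Ω | Z ω ≤ (n:ℝ)}).toReal ≤ u ^ c := by
        intro n; rw [hcdf]
        exact Real.rpow_le_rpow (hGnn _) (hcon n) hc.le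
      have hge := le_of_tendsto' ht2 hle
      have hlt : u ^ c < 1 := Real.rpow_lt_one hu0 hu1 hc
      linarith
    obtain ⟨n, hn⟩ := hn
    have hx := intermediate_value_Icc (by positivity : (0:ℝ) ≤ (n:ℝ)) hGc.continuousOn
    have hmem : u ∈ Icc (G 0) (G (n:ℝ)) := ⟨by rw [hG0]; exact hu0, hn.le⟩
    obtain ⟨x₀, hx₀mem, hx₀⟩ := hx hmem
    exact ⟨x₀, hx₀mem.1, hx₀⟩
  -- extensionality on Iic
  refine Measure.ext_of_Iic _ _ fun u => ?_
  rw [Measure.map_apply hGZm measurableSet_Iic, Measure.map_apply hrc measurableSet_Iic,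
    Measure.restrict_apply (hrc measurableSet_Iic)]
  rcases lt_or_ge u 0 with hu | hu0
  · have h1 : (fun ω => G (Z ω)) ⁻¹' Iic u = ∅ := by
      apply eq_empty_iff_forall_notMem.mpr
      intro ω h
      have h' : G (Z ω) ≤ u := h
      linarith [hGnn (Z ω)]
    have h2 : (fun t : ℝ => t ^ c⁻¹) ⁻¹' Iic u ∩ Ioo 0 1 = ∅ := by
      apply eq_empty_iff_forall_notMem.mpr
      rintro t ⟨ht1, ht2⟩
      have hp : (0:ℝ) < t ^ c⁻¹ := Real.rpow_pos_of_pos ht2.1 _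
      have h' : t ^ c⁻¹ ≤ u := ht1
      linarith
    rw [h1, h2]
    simp
  rcases lt_or_ge u 1 with hu1 | hu1
  · obtain ⟨x₀, hx₀nn, hx₀⟩ := hsurj u hu0 hu1
    have h1 : (fun ω => G (Z ω)) ⁻¹' Iic u = {ω | Z ω ≤ x₀} := by
      ext ω
      simp only [mem_preimage, mem_Iic, mem_setOf_eq]
      rw [← hx₀]
      exact hGm.le_iff_le (hZnn ω) hx₀nn
    have h2 : (fun t : ℝ => t ^ c⁻¹) ⁻¹' Iic u ∩ Ioo 0 1 = Ioc 0 (u ^ c) := by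
      ext t
      simp only [mem_preimage, mem_Iic, mem_inter_iff, mem_Ioo, mem_Ioc]
      constructor
      · rintro ⟨h1', h2'⟩
        exact ⟨h2'.1, (Real.rpow_inv_le_iff_of_pos h2'.1.le hu0 hc).mp h1'⟩
      · rintro ⟨h1', h2'⟩
        have h3' : t < 1 := lt_of_le_of_lt h2' (Real.rpow_lt_one hu0 hu1 hc)
        exact ⟨(Real.rpow_inv_le_iff_of_pos h1'.le hu0 hc).mpr h2', h1', h3'⟩
    rw [h1, h2, Real.volume_Ioc, sub_zero]
    have h3 := hcdf x₀
    rw [hx₀] at h3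
    rw [← h3]
    exact (ENNReal.ofReal_toReal (measure_ne_top _ _)).symm
  · have h1 : (fun ω => G (Z ω)) ⁻¹' Iic u = univ := by
      apply eq_univ_iff_forall.mpr
      intro ω
      exact le_trans (hG1 (Z ω)) hu1
    have h2 : (fun t : ℝ => t ^ c⁻¹) ⁻¹' Iic u ∩ Ioo 0 1 = Ioo 0 1 := by
      apply inter_eq_self_of_subset_right
      intro t ht
      have : t ^ c⁻¹ ≤ 1 := Real.rpow_le_one ht.1.le ht.2.le (by positivity)
      exact le_trans this hu1
    rw [h1, h2, measure_univ, Real.volume_Ioo]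
    norm_num

lemma prhrKernel_comp (G : ℝ → ℝ) (hGm : StrictMonoOn G (Set.Ici 0))
    {a b c d : ℝ} (ha : 0 ≤ a) (hb : 0 ≤ b) (hc : 0 ≤ c) (hd : 0 ≤ d) :
    prhrKernel (G a) (G b) (G c) (G d) = prhrKernel a b c d := by
  unfold prhrKernel
  simp only [hGm.lt_iff_lt ha hc, hGm.lt_iff_lt hd hb, hGm.lt_iff_lt hb hc,
    hGm.lt_iff_lt hc ha, hGm.lt_iff_lt hb hd, hGm.lt_iff_lt hd ha]

lemma prhrSymKernel_comp (G : ℝ → ℝ) (hGm : StrictMonoOn G (Set.Ici 0))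
    {a b c d : ℝ} (ha : 0 ≤ a) (hb : 0 ≤ b) (hc : 0 ≤ c) (hd : 0 ≤ d) :
    prhrSymKernel (G a) (G b) (G c) (G d) = prhrSymKernel a b c d := by
  unfold prhrSymKernel
  rw [prhrKernel_comp G hGm ha hb hc hd, prhrKernel_comp G hGm hb ha hc hd,
    prhrKernel_comp G hGm ha hb hd hc, prhrKernel_comp G hGm hb ha hd hc]

lemma measurable_ind3 {f1 f2 f3 g1 g2 g3 : ℝ × ℝ × ℝ → ℝ} (h1 : Measurable f1)
    (h2 : Measurable f2) (h3 : Measurable f3) (k1 : Measurable g1) (k2 : Measurable g2)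
    (k3 : Measurable g3) :
    Measurable (fun p => if f1 p < g1 p ∧ f2 p < g2 p ∧ f3 p < g3 p then (1:ℝ) else 0) :=
  Measurable.ite ((measurableSet_lt h1 k1).inter
    ((measurableSet_lt h2 k2).inter (measurableSet_lt h3 k3))) measurable_const measurable_const

lemma integrable_ind3 {μ : Measure (ℝ × ℝ × ℝ)} [IsFiniteMeasure μ]
    {f1 f2 f3 g1 g2 g3 : ℝ × ℝ × ℝ → ℝ} (h1 : Measurable f1)
    (h2 : Measurable f2) (h3 : Measurable f3) (k1 : Measurable g1) (k2 : Measurable g2)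
    (k3 : Measurable g3) :
    Integrable (fun p => if f1 p < g1 p ∧ f2 p < g2 p ∧ f3 p < g3 p then (1:ℝ) else 0) μ :=
  integrable_bdd (measurable_ind3 h1 h2 h3 k1 k2 k3).aestronglyMeasurable
    (fun p => by split_ifs <;> simp)

lemma measurable_symKernel (q : ℝ) :
    Measurable (fun p : ℝ × ℝ × ℝ => prhrSymKernel p.1 p.2.1 q p.2.2) := by
  unfold prhrSymKernel prhrKernel
  refine Measurable.div ?_ measurable_const
  refine Measurable.add (Measurable.add (Measurable.add (Measurable.sub ?_ ?_)
    (Measurable.sub ?_ ?_)) (Measurable.sub ?_ ?_)) (Measurable.sub ?_ ?_) <;>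
  · apply measurable_ind3 <;>
      first
        | exact measurable_fst
        | exact measurable_snd.fst
        | exact measurable_snd.snd
        | exact measurable_const

/-- under the PRHR null hypothesis `F = F₀^θ` (with `F₀` continuous and
strictly increasing on `[0,∞)`), for independent `X₁, X₂ ~ F₀` and `Y₂ ~ F` and any
`y` with `0 < F y < 1`,
`E[φ(X₁, X₂, y, Y₂)] = (1/2)[θ²/((2+θ)(1+θ)) − F(y)^{1/θ} + (4/(2+θ)) F(y)^{1+2/θ}]`. -/
theorem symKernel_conditional_expectation
    {Ω : Type*} [MeasureSpace Ω] [IsProbabilityMeasure (ℙ : Measure Ω)]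
    (θ : ℝ) (hθ : 0 < θ)
    (X₁ X₂ Y₂ : Ω → ℝ) (F₀ : ℝ → ℝ)
    (hX₁m : Measurable X₁) (hX₂m : Measurable X₂) (hY₂m : Measurable Y₂)
    (hF₀cont : Continuous F₀) (hF₀mono : StrictMonoOn F₀ (Set.Ici (0 : ℝ)))
    (hX₁nn : ∀ ω, 0 ≤ X₁ ω) (hX₂nn : ∀ ω, 0 ≤ X₂ ω) (hY₂nn : ∀ ω, 0 ≤ Y₂ ω)
    (hindep : iIndepFun ![X₁, X₂, Y₂] ℙ)
    (hX₁cdf : ∀ x, (ℙ {ω | X₁ ω ≤ x}).toReal = F₀ x)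
    (hX₂cdf : ∀ x, (ℙ {ω | X₂ ω ≤ x}).toReal = F₀ x)
    (hY₂cdf : ∀ x, (ℙ {ω | Y₂ ω ≤ x}).toReal = F₀ x ^ θ)
    (y : ℝ) (hy0 : 0 < F₀ y ^ θ) (hy1 : F₀ y ^ θ < 1) :
    ∫ ω, prhrSymKernel (X₁ ω) (X₂ ω) y (Y₂ ω) ∂ℙ =
      (1 / 2) * (θ ^ 2 / ((2 + θ) * (1 + θ)) - (F₀ y ^ θ) ^ (1 / θ) +
        (4 / (2 + θ)) * (F₀ y ^ θ) ^ (1 + 2 / θ)) := by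
  -- basic facts about F₀
  have hGnn : ∀ x, 0 ≤ F₀ x := fun x => (hX₁cdf x) ▸ ENNReal.toReal_nonneg
  have hG1 : ∀ x, F₀ x ≤ 1 := by
    intro x
    rw [← hX₁cdf x]
    have h := prob_le_one (μ := (ℙ : Measure Ω)) (s := {ω | X₁ ω ≤ x})
    simpa using ENNReal.toReal_mono ENNReal.one_ne_top h
  have hq0 : 0 < F₀ y := by
    rcases (hGnn y).lt_or_eq with h | h
    · exact h
    · rw [← h, Real.zero_rpow hθ.ne'] at hy0
      exact absurd hy0 (lt_irrefl 0)
  have hq1 : F₀ y < 1 := by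
    by_contra h
    push_neg at h
    exact absurd hy1 (not_lt.mpr (Real.one_le_rpow h hθ.le))
  have hynn : 0 ≤ y := by
    by_contra h
    push_neg at h
    have hempty : {ω : Ω | X₁ ω ≤ y} = ∅ := by
      apply Set.eq_empty_iff_forall_notMem.mpr
      intro ω hω
      have : (0:ℝ) ≤ y := le_trans (hX₁nn ω) hω
      linarith
    have h2 := hX₁cdf y
    rw [hempty] at h2
    simp only [measure_empty, ENNReal.toReal_zero] at h2
    rw [← h2] at hq0
    exact absurd hq0 (lt_irrefl 0)
  -- the three laws
  have hGm : Measurable F₀ := hF₀cont.measurable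
  have law1 : Measure.map (fun ω => F₀ (X₁ ω)) ℙ = volume.restrict (Ioo 0 1) := by
    have h := law_map F₀ hF₀cont hF₀mono hGnn hG1 1 one_pos X₁ hX₁m hX₁nn
      (fun x => by rw [Real.rpow_one]; exact hX₁cdf x)
    rw [h, show (fun t : ℝ => t ^ (1:ℝ)⁻¹) = fun t => t from
      funext fun t => by rw [inv_one, Real.rpow_one], Measure.map_id']
  have law2 : Measure.map (fun ω => F₀ (X₂ ω)) ℙ = volume.restrict (Ioo 0 1) := by
    have h := law_map F₀ hF₀cont hF₀mono hGnn hG1 1 one_pos X₂ hX₂m hX₂nn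
      (fun x => by rw [Real.rpow_one]; exact hX₂cdf x)
    rw [h, show (fun t : ℝ => t ^ (1:ℝ)⁻¹) = fun t => t from
      funext fun t => by rw [inv_one, Real.rpow_one], Measure.map_id']
  have law3 : Measure.map (fun ω => F₀ (Y₂ ω)) ℙ =
      Measure.map (fun t : ℝ => t ^ θ⁻¹) (volume.restrict (Ioo 0 1)) :=
    law_map F₀ hF₀cont hF₀mono hGnn hG1 θ hθ Y₂ hY₂m hY₂nn hY₂cdf
  -- independence of the composed variables
  have hveq : (fun i => F₀ ∘ ![X₁, X₂, Y₂] i) =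
      ![fun ω => F₀ (X₁ ω), fun ω => F₀ (X₂ ω), fun ω => F₀ (Y₂ ω)] := by
    funext i
    fin_cases i <;> rfl
  have hcomp : iIndepFun
      ![fun ω => F₀ (X₁ ω), fun ω => F₀ (X₂ ω), fun ω => F₀ (Y₂ ω)] ℙ := by
    have h := hindep.comp (fun _ => F₀) (fun _ => hGm)
    rwa [hveq] at h
  have hUm : ∀ i, Measurable
      (![fun ω => F₀ (X₁ ω), fun ω => F₀ (X₂ ω), fun ω => F₀ (Y₂ ω)] i) := by
    intro i
    fin_cases i
    · exact hGm.comp hX₁m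
    · exact hGm.comp hX₂m
    · exact hGm.comp hY₂m
  have hpair : IndepFun (fun ω => F₀ (X₂ ω)) (fun ω => F₀ (Y₂ ω)) ℙ := by
    have h := hcomp.indepFun (show (1 : Fin 3) ≠ 2 by decide)
    simpa using h
  have htrip : IndepFun (fun ω => (F₀ (X₂ ω), F₀ (Y₂ ω))) (fun ω => F₀ (X₁ ω)) ℙ := by
    have h := hcomp.indepFun_prodMk hUm 1 2 0 (by decide) (by decide)
    simpa using h
  have hU1m : Measurable fun ω => F₀ (X₁ ω) := hGm.comp hX₁m
  have hU2m : Measurable fun ω => F₀ (X₂ ω) := hGm.comp hX₂m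
  have hWm : Measurable fun ω => F₀ (Y₂ ω) := hGm.comp hY₂m
  have hpm : Measurable fun ω => (F₀ (X₂ ω), F₀ (Y₂ ω)) := hU2m.prodMk hWm
  have lawpair : Measure.map (fun ω => (F₀ (X₂ ω), F₀ (Y₂ ω))) ℙ =
      (volume.restrict (Ioo 0 1)).prod
        (Measure.map (fun t : ℝ => t ^ θ⁻¹) (volume.restrict (Ioo 0 1))) := by
    rw [(indepFun_iff_map_prod_eq_prod_map_map hU2m.aemeasurable
      hWm.aemeasurable).mp hpair, law2, law3]
  have lawtrip : Measure.map (fun ω => (F₀ (X₁ ω), (F₀ (X₂ ω), F₀ (Y₂ ω)))) ℙ =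
      (volume.restrict (Ioo 0 1)).prod ((volume.restrict (Ioo 0 1)).prod
        (Measure.map (fun t : ℝ => t ^ θ⁻¹) (volume.restrict (Ioo 0 1)))) := by
    rw [(indepFun_iff_map_prod_eq_prod_map_map hU1m.aemeasurable
      hpm.aemeasurable).mp htrip.symm, law1, lawpair]
  -- transfer the integral to the product measure
  have step1 : ∫ ω, prhrSymKernel (X₁ ω) (X₂ ω) y (Y₂ ω) ∂ℙ =
      ∫ p : ℝ × ℝ × ℝ, prhrSymKernel p.1 p.2.1 (F₀ y) p.2.2
        ∂((volume.restrict (Ioo 0 1)).prod ((volume.restrict (Ioo 0 1)).prod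
          (Measure.map (fun t : ℝ => t ^ θ⁻¹) (volume.restrict (Ioo 0 1))))) := by
    rw [← lawtrip, integral_map (φ := fun ω => (F₀ (X₁ ω), (F₀ (X₂ ω), F₀ (Y₂ ω))))
      (hU1m.prodMk hpm).aemeasurable
      (measurable_symKernel (F₀ y)).aestronglyMeasurable]
    refine integral_congr_ae (Filter.Eventually.of_forall fun ω => ?_)
    exact (prhrSymKernel_comp F₀ hF₀mono (hX₁nn ω) (hX₂nn ω) hynn (hY₂nn ω)).symm
  rw [step1]
  haveI : IsProbabilityMeasure (volume.restrict (Ioo (0:ℝ) 1)) := lam_prob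
  haveI : IsProbabilityMeasure
      (Measure.map (fun t : ℝ => t ^ θ⁻¹) (volume.restrict (Ioo (0:ℝ) 1))) :=
    Measure.isProbabilityMeasure_map (measurable_rinv θ).aemeasurable
  have hi1 : Integrable (fun p : ℝ × ℝ × ℝ => if p.1 < F₀ y ∧ p.2.2 < p.2.1 ∧ p.2.1 < F₀ y then (1:ℝ) else 0)
      ((volume.restrict (Ioo 0 1)).prod ((volume.restrict (Ioo 0 1)).prod
      (Measure.map (fun t : ℝ => t ^ θ⁻¹) (volume.restrict (Ioo 0 1))))) :=
    integrable_ind3 measurable_fst measurable_snd.snd measurable_snd.fst measurable_const measurable_snd.fst measurable_const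
  have hi2 : Integrable (fun p : ℝ × ℝ × ℝ => if F₀ y < p.1 ∧ p.2.1 < p.2.2 ∧ p.2.2 < p.1 then (1:ℝ) else 0)
      ((volume.restrict (Ioo 0 1)).prod ((volume.restrict (Ioo 0 1)).prod
      (Measure.map (fun t : ℝ => t ^ θ⁻¹) (volume.restrict (Ioo 0 1))))) :=
    integrable_ind3 measurable_const measurable_snd.fst measurable_snd.snd measurable_fst measurable_snd.snd measurable_fst
  have hi3 : Integrable (fun p : ℝ × ℝ × ℝ => if p.2.1 < F₀ y ∧ p.2.2 < p.1 ∧ p.1 < F₀ y then (1:ℝ) else 0)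
      ((volume.restrict (Ioo 0 1)).prod ((volume.restrict (Ioo 0 1)).prod
      (Measure.map (fun t : ℝ => t ^ θ⁻¹) (volume.restrict (Ioo 0 1))))) :=
    integrable_ind3 measurable_snd.fst measurable_snd.snd measurable_fst measurable_const measurable_fst measurable_const
  have hi4 : Integrable (fun p : ℝ × ℝ × ℝ => if F₀ y < p.2.1 ∧ p.1 < p.2.2 ∧ p.2.2 < p.2.1 then (1:ℝ) else 0)
      ((volume.restrict (Ioo 0 1)).prod ((volume.restrict (Ioo 0 1)).prod
      (Measure.map (fun t : ℝ => t ^ θ⁻¹) (volume.restrict (Ioo 0 1))))) :=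
    integrable_ind3 measurable_const measurable_fst measurable_snd.snd measurable_snd.fst measurable_snd.snd measurable_snd.fst
  have hi5 : Integrable (fun p : ℝ × ℝ × ℝ => if p.1 < p.2.2 ∧ F₀ y < p.2.1 ∧ p.2.1 < p.2.2 then (1:ℝ) else 0)
      ((volume.restrict (Ioo 0 1)).prod ((volume.restrict (Ioo 0 1)).prod
      (Measure.map (fun t : ℝ => t ^ θ⁻¹) (volume.restrict (Ioo 0 1))))) :=
    integrable_ind3 measurable_fst measurable_const measurable_snd.fst measurable_snd.snd measurable_snd.fst measurable_snd.snd
  have hi6 : Integrable (fun p : ℝ × ℝ × ℝ => if p.2.2 < p.1 ∧ p.2.1 < F₀ y ∧ F₀ y < p.1 then (1:ℝ) else 0)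
      ((volume.restrict (Ioo 0 1)).prod ((volume.restrict (Ioo 0 1)).prod
      (Measure.map (fun t : ℝ => t ^ θ⁻¹) (volume.restrict (Ioo 0 1))))) :=
    integrable_ind3 measurable_snd.snd measurable_snd.fst measurable_const measurable_fst measurable_const measurable_fst
  have hi7 : Integrable (fun p : ℝ × ℝ × ℝ => if p.2.1 < p.2.2 ∧ F₀ y < p.1 ∧ p.1 < p.2.2 then (1:ℝ) else 0)
      ((volume.restrict (Ioo 0 1)).prod ((volume.restrict (Ioo 0 1)).prod
      (Measure.map (fun t : ℝ => t ^ θ⁻¹) (volume.restrict (Ioo 0 1))))) :=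
    integrable_ind3 measurable_snd.fst measurable_const measurable_fst measurable_snd.snd measurable_fst measurable_snd.snd
  have hi8 : Integrable (fun p : ℝ × ℝ × ℝ => if p.2.2 < p.2.1 ∧ p.1 < F₀ y ∧ F₀ y < p.2.1 then (1:ℝ) else 0)
      ((volume.restrict (Ioo 0 1)).prod ((volume.restrict (Ioo 0 1)).prod
      (Measure.map (fun t : ℝ => t ^ θ⁻¹) (volume.restrict (Ioo 0 1))))) :=
    integrable_ind3 measurable_snd.snd measurable_fst measurable_const measurable_snd.fst measurable_const measurable_snd.fst
  have expand : (fun p : ℝ × ℝ × ℝ => prhrSymKernel p.1 p.2.1 (F₀ y) p.2.2) =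
      fun p : ℝ × ℝ × ℝ =>
        ((if p.1 < F₀ y ∧ p.2.2 < p.2.1 ∧ p.2.1 < F₀ y then (1:ℝ) else 0) - (if F₀ y < p.1 ∧ p.2.1 < p.2.2 ∧ p.2.2 < p.1 then (1:ℝ) else 0)
          + ((if p.2.1 < F₀ y ∧ p.2.2 < p.1 ∧ p.1 < F₀ y then (1:ℝ) else 0) - (if F₀ y < p.2.1 ∧ p.1 < p.2.2 ∧ p.2.2 < p.2.1 then (1:ℝ) else 0))
          + ((if p.1 < p.2.2 ∧ F₀ y < p.2.1 ∧ p.2.1 < p.2.2 then (1:ℝ) else 0) - (if p.2.2 < p.1 ∧ p.2.1 < F₀ y ∧ F₀ y < p.1 then (1:ℝ) else 0))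
          + ((if p.2.1 < p.2.2 ∧ F₀ y < p.1 ∧ p.1 < p.2.2 then (1:ℝ) else 0) - (if p.2.2 < p.2.1 ∧ p.1 < F₀ y ∧ F₀ y < p.2.1 then (1:ℝ) else 0))) / 4 := rfl
  have k1 : Integrable (fun p : ℝ × ℝ × ℝ => (if p.1 < F₀ y ∧ p.2.2 < p.2.1 ∧ p.2.1 < F₀ y then (1:ℝ) else 0) - (if F₀ y < p.1 ∧ p.2.1 < p.2.2 ∧ p.2.2 < p.1 then (1:ℝ) else 0))
      ((volume.restrict (Ioo 0 1)).prod ((volume.restrict (Ioo 0 1)).prod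
      (Measure.map (fun t : ℝ => t ^ θ⁻¹) (volume.restrict (Ioo 0 1))))) := hi1.sub hi2
  have k2 : Integrable (fun p : ℝ × ℝ × ℝ => (if p.2.1 < F₀ y ∧ p.2.2 < p.1 ∧ p.1 < F₀ y then (1:ℝ) else 0) - (if F₀ y < p.2.1 ∧ p.1 < p.2.2 ∧ p.2.2 < p.2.1 then (1:ℝ) else 0))
      ((volume.restrict (Ioo 0 1)).prod ((volume.restrict (Ioo 0 1)).prod
      (Measure.map (fun t : ℝ => t ^ θ⁻¹) (volume.restrict (Ioo 0 1))))) := hi3.sub hi4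
  have k3 : Integrable (fun p : ℝ × ℝ × ℝ => (if p.1 < p.2.2 ∧ F₀ y < p.2.1 ∧ p.2.1 < p.2.2 then (1:ℝ) else 0) - (if p.2.2 < p.1 ∧ p.2.1 < F₀ y ∧ F₀ y < p.1 then (1:ℝ) else 0))
      ((volume.restrict (Ioo 0 1)).prod ((volume.restrict (Ioo 0 1)).prod
      (Measure.map (fun t : ℝ => t ^ θ⁻¹) (volume.restrict (Ioo 0 1))))) := hi5.sub hi6
  have k4 : Integrable (fun p : ℝ × ℝ × ℝ => (if p.2.1 < p.2.2 ∧ F₀ y < p.1 ∧ p.1 < p.2.2 then (1:ℝ) else 0) - (if p.2.2 < p.2.1 ∧ p.1 < F₀ y ∧ F₀ y < p.2.1 then (1:ℝ) else 0))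
      ((volume.restrict (Ioo 0 1)).prod ((volume.restrict (Ioo 0 1)).prod
      (Measure.map (fun t : ℝ => t ^ θ⁻¹) (volume.restrict (Ioo 0 1))))) := hi7.sub hi8
  have k12 : Integrable (fun p : ℝ × ℝ × ℝ => ((if p.1 < F₀ y ∧ p.2.2 < p.2.1 ∧ p.2.1 < F₀ y then (1:ℝ) else 0) - (if F₀ y < p.1 ∧ p.2.1 < p.2.2 ∧ p.2.2 < p.1 then (1:ℝ) else 0)) + ((if p.2.1 < F₀ y ∧ p.2.2 < p.1 ∧ p.1 < F₀ y then (1:ℝ) else 0) - (if F₀ y < p.2.1 ∧ p.1 < p.2.2 ∧ p.2.2 < p.2.1 then (1:ℝ) else 0)))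
      ((volume.restrict (Ioo 0 1)).prod ((volume.restrict (Ioo 0 1)).prod
      (Measure.map (fun t : ℝ => t ^ θ⁻¹) (volume.restrict (Ioo 0 1))))) := k1.add k2
  have k123 : Integrable (fun p : ℝ × ℝ × ℝ => (((if p.1 < F₀ y ∧ p.2.2 < p.2.1 ∧ p.2.1 < F₀ y then (1:ℝ) else 0) - (if F₀ y < p.1 ∧ p.2.1 < p.2.2 ∧ p.2.2 < p.1 then (1:ℝ) else 0)) + ((if p.2.1 < F₀ y ∧ p.2.2 < p.1 ∧ p.1 < F₀ y then (1:ℝ) else 0) - (if F₀ y < p.2.1 ∧ p.1 < p.2.2 ∧ p.2.2 < p.2.1 then (1:ℝ) else 0))) + ((if p.1 < p.2.2 ∧ F₀ y < p.2.1 ∧ p.2.1 < p.2.2 then (1:ℝ) else 0) - (if p.2.2 < p.1 ∧ p.2.1 < F₀ y ∧ F₀ y < p.1 then (1:ℝ) else 0)))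
      ((volume.restrict (Ioo 0 1)).prod ((volume.restrict (Ioo 0 1)).prod
      (Measure.map (fun t : ℝ => t ^ θ⁻¹) (volume.restrict (Ioo 0 1))))) := k12.add k3
  rw [expand, integral_div, integral_add k123 k4, integral_add k12 k3,
    integral_add k1 k2, integral_sub hi1 hi2, integral_sub hi3 hi4,
    integral_sub hi5 hi6, integral_sub hi7 hi8]
  have sw3 : (∫ p : ℝ × ℝ × ℝ, (if p.2.1 < F₀ y ∧ p.2.2 < p.1 ∧ p.1 < F₀ y then (1:ℝ) else 0)
      ∂((volume.restrict (Ioo 0 1)).prod ((volume.restrict (Ioo 0 1)).prod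
      (Measure.map (fun t : ℝ => t ^ θ⁻¹) (volume.restrict (Ioo 0 1)))))) = ∫ p : ℝ × ℝ × ℝ, (if p.1 < F₀ y ∧ p.2.2 < p.2.1 ∧ p.2.1 < F₀ y then (1:ℝ) else 0)
      ∂((volume.restrict (Ioo 0 1)).prod ((volume.restrict (Ioo 0 1)).prod
      (Measure.map (fun t : ℝ => t ^ θ⁻¹) (volume.restrict (Ioo 0 1))))) :=
    integral_swap12 (volume.restrict (Ioo 0 1)) (volume.restrict (Ioo 0 1))
      (Measure.map (fun t : ℝ => t ^ θ⁻¹) (volume.restrict (Ioo 0 1)))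
      (fun p : ℝ × ℝ × ℝ => if p.2.1 < F₀ y ∧ p.2.2 < p.1 ∧ p.1 < F₀ y then (1:ℝ) else 0)
  have sw4 : (∫ p : ℝ × ℝ × ℝ, (if F₀ y < p.2.1 ∧ p.1 < p.2.2 ∧ p.2.2 < p.2.1 then (1:ℝ) else 0)
      ∂((volume.restrict (Ioo 0 1)).prod ((volume.restrict (Ioo 0 1)).prod
      (Measure.map (fun t : ℝ => t ^ θ⁻¹) (volume.restrict (Ioo 0 1)))))) = ∫ p : ℝ × ℝ × ℝ, (if F₀ y < p.1 ∧ p.2.1 < p.2.2 ∧ p.2.2 < p.1 then (1:ℝ) else 0)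
      ∂((volume.restrict (Ioo 0 1)).prod ((volume.restrict (Ioo 0 1)).prod
      (Measure.map (fun t : ℝ => t ^ θ⁻¹) (volume.restrict (Ioo 0 1))))) :=
    integral_swap12 (volume.restrict (Ioo 0 1)) (volume.restrict (Ioo 0 1))
      (Measure.map (fun t : ℝ => t ^ θ⁻¹) (volume.restrict (Ioo 0 1)))
      (fun p : ℝ × ℝ × ℝ => if F₀ y < p.2.1 ∧ p.1 < p.2.2 ∧ p.2.2 < p.2.1 then (1:ℝ) else 0)
  have sw7 : (∫ p : ℝ × ℝ × ℝ, (if p.2.1 < p.2.2 ∧ F₀ y < p.1 ∧ p.1 < p.2.2 then (1:ℝ) else 0)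
      ∂((volume.restrict (Ioo 0 1)).prod ((volume.restrict (Ioo 0 1)).prod
      (Measure.map (fun t : ℝ => t ^ θ⁻¹) (volume.restrict (Ioo 0 1)))))) = ∫ p : ℝ × ℝ × ℝ, (if p.1 < p.2.2 ∧ F₀ y < p.2.1 ∧ p.2.1 < p.2.2 then (1:ℝ) else 0)
      ∂((volume.restrict (Ioo 0 1)).prod ((volume.restrict (Ioo 0 1)).prod
      (Measure.map (fun t : ℝ => t ^ θ⁻¹) (volume.restrict (Ioo 0 1))))) :=
    integral_swap12 (volume.restrict (Ioo 0 1)) (volume.restrict (Ioo 0 1))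
      (Measure.map (fun t : ℝ => t ^ θ⁻¹) (volume.restrict (Ioo 0 1)))
      (fun p : ℝ × ℝ × ℝ => if p.2.1 < p.2.2 ∧ F₀ y < p.1 ∧ p.1 < p.2.2 then (1:ℝ) else 0)
  have sw8 : (∫ p : ℝ × ℝ × ℝ, (if p.2.2 < p.2.1 ∧ p.1 < F₀ y ∧ F₀ y < p.2.1 then (1:ℝ) else 0)
      ∂((volume.restrict (Ioo 0 1)).prod ((volume.restrict (Ioo 0 1)).prod
      (Measure.map (fun t : ℝ => t ^ θ⁻¹) (volume.restrict (Ioo 0 1)))))) = ∫ p : ℝ × ℝ × ℝ, (if p.2.2 < p.1 ∧ p.2.1 < F₀ y ∧ F₀ y < p.1 then (1:ℝ) else 0)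
      ∂((volume.restrict (Ioo 0 1)).prod ((volume.restrict (Ioo 0 1)).prod
      (Measure.map (fun t : ℝ => t ^ θ⁻¹) (volume.restrict (Ioo 0 1))))) :=
    integral_swap12 (volume.restrict (Ioo 0 1)) (volume.restrict (Ioo 0 1))
      (Measure.map (fun t : ℝ => t ^ θ⁻¹) (volume.restrict (Ioo 0 1)))
      (fun p : ℝ × ℝ × ℝ => if p.2.2 < p.2.1 ∧ p.1 < F₀ y ∧ F₀ y < p.2.1 then (1:ℝ) else 0)
  rw [sw3, sw4, sw7, sw8,
    termA1 θ (F₀ y) hθ hq0 hq1, termA2 θ (F₀ y) hθ hq0 hq1,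
    termC1 θ (F₀ y) hθ hq0 hq1, termC2 θ (F₀ y) hθ hq0 hq1]
  have e1 : (F₀ y ^ θ) ^ (1 / θ) = F₀ y := by
    rw [← Real.rpow_mul (hGnn y)]
    rw [show θ * (1 / θ) = 1 from by field_simp, Real.rpow_one]
  have e2 : (F₀ y ^ θ) ^ (1 + 2 / θ) = F₀ y ^ (θ + 1 + 1) := by
    rw [← Real.rpow_mul (hGnn y)]
    congr 1
    field_simp
    ring
  have e3 : F₀ y ^ (θ + 1 + 1) = F₀ y ^ (θ + 1) * F₀ y := Real.rpow_add_one hq0.ne' (θ + 1)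
  rw [e1, e2, e3]
  have h6 : θ ≠ 0 := hθ.ne'
  have h1 : θ + 1 ≠ 0 := by positivity
  have h2 : θ + 1 + 1 ≠ 0 := by positivity
  have h4 : 2 + θ ≠ 0 := by positivity
  have h5 : 1 + θ ≠ 0 := by positivity
  have e4 : (θ⁻¹ + 1)⁻¹ = θ / (1 + θ) := by
    rw [show θ⁻¹ + 1 = (1 + θ) / θ from by field_simp]
    rw [inv_div]
  rw [e4]
  field_simp
  ring
end

section
/- For every θ > 0, the integral identity ∫₀¹ ( (1/2)[θ²/((2+θ)(1+θ)) − u^{1/θ} + (4/(2+θ))·u^{1+2/θ}] )² du = (θ/(4(2+θ)))·[1 − 8/(3+2θ) + 16/((4+3θ)(2+θ)) − θ³/((2+θ)(θ+1)²)] holds; that is, σ₀₁²(θ), the variance of the conditional expectation of the symmetrized kernel given Y₁ under the PRHR null hypothesis, has the stated closed form. -/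
open intervalIntegral in
private lemma integral_c_rpow (c r : ℝ) (hr : -1 < r) :
    ∫ u in (0 : ℝ)..1, c * u ^ r = c / (r + 1) := by
  rw [intervalIntegral.integral_const_mul, integral_rpow (Or.inl hr),
    Real.one_rpow, Real.zero_rpow (by linarith)]
  ring

/-- the closed form of `σ₀₁²(θ)`, the variance of the conditional
expectation of the symmetrized kernel given `Y₁` under the PRHR null hypothesis:
`∫₀¹ ((1/2)[θ²/((2+θ)(1+θ)) − u^{1/θ} + (4/(2+θ)) u^{1+2/θ}])² du
  = (θ/(4(2+θ)))[1 − 8/(3+2θ) + 16/((4+3θ)(2+θ)) − θ³/((2+θ)(θ+1)²)]`. -/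
theorem sigma01_closed_form (θ : ℝ) (hθ : 0 < θ) :
    ∫ u in (0 : ℝ)..1,
        ((1 / 2) * (θ ^ 2 / ((2 + θ) * (1 + θ)) - u ^ (1 / θ) +
          (4 / (2 + θ)) * u ^ (1 + 2 / θ))) ^ 2 =
      (θ / (4 * (2 + θ))) * (1 - 8 / (3 + 2 * θ) + 16 / ((4 + 3 * θ) * (2 + θ)) -
        θ ^ 3 / ((2 + θ) * (θ + 1) ^ 2)) := by
  have hθ' : θ ≠ 0 := hθ.ne'
  set a : ℝ := θ ^ 2 / ((2 + θ) * (1 + θ)) with ha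
  set b : ℝ := 4 / (2 + θ) with hb
  set p : ℝ := 1 / θ with hp
  set q : ℝ := 1 + 2 / θ with hq
  have hp0 : 0 < p := by positivity
  have hq0 : 0 < q := by positivity
  -- rewrite integrand
  have hcong : ∀ u ∈ Set.uIcc (0 : ℝ) 1,
      ((1 / 2) * (a - u ^ p + b * u ^ q)) ^ 2 =
        a ^ 2 / 4 + (-(a / 2)) * u ^ p + (a * b / 2) * u ^ q +
          (1 / 4 : ℝ) * u ^ (2 * p) + (-(b / 2)) * u ^ (p + q) +
          (b ^ 2 / 4) * u ^ (2 * q) := by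
    intro u hu'
    have hu0 : (0:ℝ) ≤ u := by
      rw [Set.uIcc_of_le (by norm_num : (0:ℝ) ≤ 1)] at hu'
      exact hu'.1
    rcases eq_or_ne u 0 with rfl | hu
    · rw [Real.zero_rpow hp0.ne', Real.zero_rpow hq0.ne',
        Real.zero_rpow (by positivity), Real.zero_rpow (by positivity),
        Real.zero_rpow (by positivity)]
      ring
    · have h1 : u ^ (2 * p) = u ^ p * u ^ p := by
        rw [two_mul, Real.rpow_add' hu0 (by positivity)]
      have h2 : u ^ (p + q) = u ^ p * u ^ q := Real.rpow_add' hu0 (by positivity)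
      have h3 : u ^ (2 * q) = u ^ q * u ^ q := by
        rw [two_mul, Real.rpow_add' hu0 (by positivity)]
      rw [h1, h2, h3]; ring
  rw [intervalIntegral.integral_congr hcong]
  -- integrability facts
  have int_rpow : ∀ r : ℝ, -1 < r → ∀ c : ℝ,
      IntervalIntegrable (fun u : ℝ => c * u ^ r) MeasureTheory.volume 0 1 :=
    fun r hr c => (intervalIntegral.intervalIntegrable_rpow' hr).const_mul c
  have hpI : (-1 : ℝ) < p := by linarith
  have hqI : (-1 : ℝ) < q := by linarith
  have h2pI : (-1 : ℝ) < 2 * p := by linarith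
  have hpqI : (-1 : ℝ) < p + q := by linarith
  have h2qI : (-1 : ℝ) < 2 * q := by linarith
  have i1 := int_rpow p hpI (-(a / 2))
  have i2 := int_rpow q hqI (a * b / 2)
  have i3 := int_rpow (2 * p) h2pI (1 / 4)
  have i4 := int_rpow (p + q) hpqI (-(b / 2))
  have i5 := int_rpow (2 * q) h2qI (b ^ 2 / 4)
  have ic : IntervalIntegrable (fun _ : ℝ => a ^ 2 / 4) MeasureTheory.volume 0 1 :=
    intervalIntegrable_const
  rw [intervalIntegral.integral_add ((((ic.add i1).add i2).add i3).add i4) i5,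
    intervalIntegral.integral_add (((ic.add i1).add i2).add i3) i4,
    intervalIntegral.integral_add ((ic.add i1).add i2) i3,
    intervalIntegral.integral_add (ic.add i1) i2,
    intervalIntegral.integral_add ic i1,
    intervalIntegral.integral_const,
    integral_c_rpow _ _ hpI, integral_c_rpow _ _ hqI, integral_c_rpow _ _ h2pI,
    integral_c_rpow _ _ hpqI, integral_c_rpow _ _ h2qI]
  -- now pure algebra
  have hθ2 : (2 + θ : ℝ) ≠ 0 := by positivity
  have hθ1 : (1 + θ : ℝ) ≠ 0 := by positivity
  have hθ3 : (3 + 2 * θ : ℝ) ≠ 0 := by positivity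
  have hθ4 : (4 + 3 * θ : ℝ) ≠ 0 := by positivity
  have hθ1' : (θ + 1 : ℝ) ≠ 0 := by positivity
  have e1 : p + 1 = (1 + θ) / θ := by simp only [hp, hq]; field_simp; try ring
  have e2 : q + 1 = (2 + 2 * θ) / θ := by simp only [hp, hq]; field_simp; try ring
  have e3 : 2 * p + 1 = (2 + θ) / θ := by simp only [hp, hq]; field_simp; try ring
  have e4 : p + q + 1 = (3 + 2 * θ) / θ := by simp only [hp, hq]; field_simp; try ring
  have e5 : 2 * q + 1 = (4 + 3 * θ) / θ := by simp only [hp, hq]; field_simp; try ring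
  rw [e1, e2, e3, e4, e5, ha, hb]
  have h22 : (2 + 2 * θ : ℝ) ≠ 0 := by positivity
  simp only [div_div_eq_mul_div, smul_eq_mul, sub_zero]
  field_simp
  ring
end
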